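/- arXiv:1603.04098 — 10 statements merged into one kernel-verified Lean document; each statement's English description precedes it below -/
import Mathlib

section
/- Consider the bi-virus ODE system ẋ¹_i = -δ¹_i x¹_i + (1 - x¹_i - x²_i) Σ_j β¹_{ij} x¹_j, ẋ²_i = -δ²_i x²_i + (1 - x¹_i - x²_i) Σ_j β²_{ij} x²_j for i ∈ [n], with δ¹_i, δ²_i ≥ 0 and β¹_{ij}, β²_{ij} ≥ 0. The set D = {(x¹, x²) : x¹ ≥ 0, x² ≥ 0, x¹ + x² ≤ 1 componentwise} is forward invariant: if (x¹(0), x²(0)) ∈ D then (x¹(t), x²(t)) ∈ D for all t ≥ 0. -/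
/-- Irreducibility of a square matrix: the directed graph with an edge from `j` to `i`
whenever `M i j > 0` is strongly connected. -/
def Irred {n : ℕ} (M : Matrix (Fin n) (Fin n) ℝ) : Prop :=
  ∀ i j : Fin n, ∃ (m : ℕ) (c : ℕ → Fin n), c 0 = j ∧ c m = i ∧
    ∀ k < m, 0 < M (c (k + 1)) (c k)

/-- Spectral abscissa: largest real part of a (complex) eigenvalue. -/
noncomputable def spA {n : ℕ} (M : Matrix (Fin n) (Fin n) ℝ) : ℝ :=
  sSup ((fun z : ℂ => z.re) '' spectrum ℂ (M.map (fun x : ℝ => (x : ℂ))))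

/-- Spectral radius: largest modulus of a (complex) eigenvalue. -/
noncomputable def spR {n : ℕ} (M : Matrix (Fin n) (Fin n) ℝ) : ℝ :=
  sSup ((fun z : ℂ => ‖z‖) '' spectrum ℂ (M.map (fun x : ℝ => (x : ℂ))))

open Filter Set Topology

lemma dini_sup_aux {ι : Type*} [Fintype ι] (hne : (Finset.univ : Finset ι).Nonempty)
    (g : ι → ℝ → ℝ) (d : ι → ℝ) (x : ℝ)
    (hg : ∀ k, HasDerivAt (g k) (d k) x) (r : ℝ)
    (hr : ∀ k, g k x = Finset.univ.sup' hne (fun j => g j x) → d k < r) :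
    ∀ᶠ z in 𝓝[>] x, (z - x)⁻¹ *
      (Finset.univ.sup' hne (fun j => g j z) - Finset.univ.sup' hne (fun j => g j x)) < r := by
  set w := Finset.univ.sup' hne (fun j => g j x) with hw
  have hsub : 𝓝[>] x ≤ 𝓝[≠] x :=
    nhdsWithin_mono x (fun z hz => ne_of_gt hz)
  have hall : ∀ k, ∀ᶠ z in 𝓝[>] x, g k z - w < r * (z - x) := by
    intro k
    by_cases hk : g k x = w
    · have hslope : Tendsto (slope (g k) x) (𝓝[>] x) (𝓝 (d k)) :=
        ((hasDerivAt_iff_tendsto_slope).1 (hg k)).mono_left hsub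
      have h2 : ∀ᶠ z in 𝓝[>] x, slope (g k) x z < r :=
        hslope.eventually_lt_const (hr k hk)
      filter_upwards [h2, self_mem_nhdsWithin] with z hz hz'
      have hzx : (0:ℝ) < z - x := sub_pos.2 hz'
      rw [slope_def_field, div_lt_iff₀ hzx] at hz
      have : g k z - g k x < r * (z - x) := by linarith
      rw [hk] at this
      linarith
    · have hlt : g k x < w :=
        lt_of_le_of_ne (Finset.le_sup' (fun j => g j x) (Finset.mem_univ k)) hk
      have hc : Tendsto (fun z => g k z - w) (𝓝[>] x) (𝓝 (g k x - w)) :=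
        (((hg k).continuousAt.tendsto).sub tendsto_const_nhds).mono_left nhdsWithin_le_nhds
      have t1 : ∀ᶠ z in 𝓝[>] x, g k z - w < (g k x - w) / 2 :=
        hc.eventually_lt_const (by linarith)
      have hc2 : Tendsto (fun z => r * (z - x)) (𝓝[>] x) (𝓝 0) := by
        have : Tendsto (fun z : ℝ => r * (z - x)) (𝓝 x) (𝓝 (r * (x - x))) :=
          (tendsto_id.sub_const x).const_mul r
        simpa using this.mono_left nhdsWithin_le_nhds
      have t2 : ∀ᶠ z in 𝓝[>] x, (g k x - w) / 2 < r * (z - x) :=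
        hc2.eventually_const_lt (by linarith)
      filter_upwards [t1, t2] with z h1 h2
      linarith
  filter_upwards [eventually_all.2 hall, self_mem_nhdsWithin] with z hz hz'
  have hzx : (0:ℝ) < z - x := sub_pos.2 hz'
  have hs : Finset.univ.sup' hne (fun j => g j z) < r * (z - x) + w := by
    rw [Finset.sup'_lt_iff]
    intro k _
    have := hz k
    linarith
  rw [inv_mul_lt_iff₀ hzx]
  linarith

/-- The constraint functions for the bi-virus invariance argument. -/
def biG {n : ℕ} (x1 x2 : ℝ → Fin n → ℝ) (k : Option (Fin n × Fin 3)) (t : ℝ) : ℝ :=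
  match k with
  | none => 0
  | some (i, c) =>
      if (c : ℕ) = 0 then -x1 t i
      else if (c : ℕ) = 1 then -x2 t i
      else x1 t i + x2 t i - 1

/-- Derivatives of the constraint functions. -/
def biD {n : ℕ} (δ1 δ2 : Fin n → ℝ) (B1 B2 : Matrix (Fin n) (Fin n) ℝ)
    (x1 x2 : ℝ → Fin n → ℝ) (k : Option (Fin n × Fin 3)) (t : ℝ) : ℝ :=
  match k with
  | none => 0
  | some (i, c) =>
      if (c : ℕ) = 0 then
        -(-δ1 i * x1 t i + (1 - x1 t i - x2 t i) * ∑ j, B1 i j * x1 t j)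
      else if (c : ℕ) = 1 then
        -(-δ2 i * x2 t i + (1 - x1 t i - x2 t i) * ∑ j, B2 i j * x2 t j)
      else
        (-δ1 i * x1 t i + (1 - x1 t i - x2 t i) * ∑ j, B1 i j * x1 t j)
          + (-δ2 i * x2 t i + (1 - x1 t i - x2 t i) * ∑ j, B2 i j * x2 t j)

set_option maxHeartbeats 1000000 in
theorem stmt3 {n : ℕ} (δ1 δ2 : Fin n → ℝ) (B1 B2 : Matrix (Fin n) (Fin n) ℝ)
    (hδ1 : ∀ i, 0 ≤ δ1 i) (hδ2 : ∀ i, 0 ≤ δ2 i)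
    (hB1 : ∀ i j, 0 ≤ B1 i j) (hB2 : ∀ i j, 0 ≤ B2 i j)
    (x1 x2 : ℝ → Fin n → ℝ)
    (hode1 : ∀ t i, HasDerivAt (fun s => x1 s i)
      (-δ1 i * x1 t i + (1 - x1 t i - x2 t i) * ∑ j, B1 i j * x1 t j) t)
    (hode2 : ∀ t i, HasDerivAt (fun s => x2 s i)
      (-δ2 i * x2 t i + (1 - x1 t i - x2 t i) * ∑ j, B2 i j * x2 t j) t)
    (hinit : ∀ i, 0 ≤ x1 0 i ∧ 0 ≤ x2 0 i ∧ x1 0 i + x2 0 i ≤ 1) :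
    ∀ t ≥ (0 : ℝ), ∀ i, 0 ≤ x1 t i ∧ 0 ≤ x2 t i ∧ x1 t i + x2 t i ≤ 1 := by
  classical
  set g : Option (Fin n × Fin 3) → ℝ → ℝ := biG x1 x2 with hg_def
  set D : Option (Fin n × Fin 3) → ℝ → ℝ := biD δ1 δ2 B1 B2 x1 x2 with hD_def
  have hne : (Finset.univ : Finset (Option (Fin n × Fin 3))).Nonempty :=
    ⟨none, Finset.mem_univ _⟩
  set f : ℝ → ℝ := fun t => Finset.univ.sup' hne (fun k => g k t) with hf_def
  -- derivatives
  have hderiv : ∀ k t, HasDerivAt (g k) (D k t) t := by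
    rintro (_ | ⟨i, c⟩) t
    · show HasDerivAt (fun s => biG x1 x2 _ s) _ t
      simpa [hg_def, hD_def, biG, biD] using (hasDerivAt_const t (0:ℝ))
    · fin_cases c
      · show HasDerivAt (fun s => biG x1 x2 _ s) _ t
        simpa [hg_def, hD_def, biG, biD, Pi.neg_def] using (hode1 t i).neg
      · show HasDerivAt (fun s => biG x1 x2 _ s) _ t
        simpa [hg_def, hD_def, biG, biD, Pi.neg_def] using (hode2 t i).neg
      · show HasDerivAt (fun s => biG x1 x2 _ s) _ t
        simpa [hg_def, hD_def, biG, biD] using ((hode1 t i).add (hode2 t i)).sub_const 1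
  have hgc : ∀ k, Continuous (g k) :=
    fun k => continuous_iff_continuousAt.2 fun t => (hderiv k t).continuousAt
  have hfc : Continuous f := by
    rw [hf_def, continuous_iff_continuousAt]
    intro t
    exact ContinuousAt.finset_sup'_apply hne fun k _ => (hgc k).continuousAt
  have hg_le_f : ∀ k t, g k t ≤ f t :=
    fun k t => Finset.le_sup' (fun j => g j t) (Finset.mem_univ k)
  have hf_nonneg : ∀ t, 0 ≤ f t := by
    intro t
    have := hg_le_f none t
    simpa [hg_def, biG] using this
  -- constants
  set C : ℝ := (∑ i, ∑ j, B1 i j) + (∑ i, ∑ j, B2 i j) + (∑ i, δ1 i) + (∑ i, δ2 i) with hC_def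
  have hsum1 : ∀ i : Fin n, (0:ℝ) ≤ ∑ j, B1 i j :=
    fun i => Finset.sum_nonneg fun j _ => hB1 i j
  have hsum2 : ∀ i : Fin n, (0:ℝ) ≤ ∑ j, B2 i j :=
    fun i => Finset.sum_nonneg fun j _ => hB2 i j
  have hs1 : (0:ℝ) ≤ ∑ i, ∑ j, B1 i j := Finset.sum_nonneg fun i _ => hsum1 i
  have hs2 : (0:ℝ) ≤ ∑ i, ∑ j, B2 i j := Finset.sum_nonneg fun i _ => hsum2 i
  have hs3 : (0:ℝ) ≤ ∑ i, δ1 i := Finset.sum_nonneg fun i _ => hδ1 i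
  have hs4 : (0:ℝ) ≤ ∑ i, δ2 i := Finset.sum_nonneg fun i _ => hδ2 i
  have hC0 : (0:ℝ) ≤ C := by simp only [hC_def]; linarith
  have hb1C : ∀ i : Fin n, (∑ j, B1 i j) ≤ C := by
    intro i
    have h1 : (∑ j, B1 i j) ≤ ∑ i, ∑ j, B1 i j :=
      Finset.single_le_sum (fun i _ => hsum1 i) (Finset.mem_univ i)
    simp only [hC_def]; linarith
  have hb2C : ∀ i : Fin n, (∑ j, B2 i j) ≤ C := by
    intro i
    have h1 : (∑ j, B2 i j) ≤ ∑ i, ∑ j, B2 i j :=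
      Finset.single_le_sum (fun i _ => hsum2 i) (Finset.mem_univ i)
    simp only [hC_def]; linarith
  have hd1C : ∀ i : Fin n, δ1 i ≤ C := by
    intro i
    have h1 : δ1 i ≤ ∑ i, δ1 i := Finset.single_le_sum (fun i _ => hδ1 i) (Finset.mem_univ i)
    simp only [hC_def]; linarith
  have hd2C : ∀ i : Fin n, δ2 i ≤ C := by
    intro i
    have h1 : δ2 i ≤ ∑ i, δ2 i := Finset.single_le_sum (fun i _ => hδ2 i) (Finset.mem_univ i)
    simp only [hC_def]; linarith
  set K : ℝ := 10 * (C + 1) with hK_def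
  have hK0 : (0:ℝ) ≤ K := by simp only [hK_def]; linarith
  -- key derivative bound at points where a constraint is active
  have key : ∀ t, f t ≤ 1 → ∀ k, g k t = f t → D k t ≤ K * f t := by
    intro t ht k hk
    have hw0 : 0 ≤ f t := hf_nonneg t
    have hx1 : ∀ j, -x1 t j ≤ f t := by
      intro j
      have := hg_le_f (some (j, 0)) t
      simpa [hg_def, biG] using this
    have hx2 : ∀ j, -x2 t j ≤ f t := by
      intro j
      have := hg_le_f (some (j, 1)) t
      simpa [hg_def, biG] using this
    have hx12 : ∀ j, x1 t j + x2 t j - 1 ≤ f t := by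
      intro j
      have := hg_le_f (some (j, 2)) t
      simpa [hg_def, biG] using this
    have hx1ub : ∀ j, x1 t j ≤ 3 := by
      intro j; have h1 := hx12 j; have h2 := hx2 j; linarith
    have hx2ub : ∀ j, x2 t j ≤ 3 := by
      intro j; have h1 := hx12 j; have h2 := hx1 j; linarith
    have hS1lb : ∀ i, -(f t * ∑ j, B1 i j) ≤ ∑ j, B1 i j * x1 t j := by
      intro i
      have h := Finset.sum_le_sum (s := Finset.univ)
        (f := fun j => -(f t * B1 i j)) (g := fun j => B1 i j * x1 t j)
        (fun j _ => by
          show -(f t * B1 i j) ≤ B1 i j * x1 t j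
          nlinarith [mul_nonneg (hB1 i j) (show (0:ℝ) ≤ x1 t j + f t by linarith [hx1 j])])
      calc -(f t * ∑ j, B1 i j) = ∑ j, -(f t * B1 i j) := by
            rw [Finset.mul_sum, ← Finset.sum_neg_distrib]
        _ ≤ ∑ j, B1 i j * x1 t j := h
    have hS2lb : ∀ i, -(f t * ∑ j, B2 i j) ≤ ∑ j, B2 i j * x2 t j := by
      intro i
      have h := Finset.sum_le_sum (s := Finset.univ)
        (f := fun j => -(f t * B2 i j)) (g := fun j => B2 i j * x2 t j)
        (fun j _ => by
          show -(f t * B2 i j) ≤ B2 i j * x2 t j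
          nlinarith [mul_nonneg (hB2 i j) (show (0:ℝ) ≤ x2 t j + f t by linarith [hx2 j])])
      calc -(f t * ∑ j, B2 i j) = ∑ j, -(f t * B2 i j) := by
            rw [Finset.mul_sum, ← Finset.sum_neg_distrib]
        _ ≤ ∑ j, B2 i j * x2 t j := h
    have hS1ub : ∀ i, (∑ j, B1 i j * x1 t j) ≤ 3 * ∑ j, B1 i j := by
      intro i
      rw [Finset.mul_sum]
      exact Finset.sum_le_sum fun j _ => by
        nlinarith [mul_nonneg (hB1 i j) (show (0:ℝ) ≤ 3 - x1 t j by linarith [hx1ub j])]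
    have hS2ub : ∀ i, (∑ j, B2 i j * x2 t j) ≤ 3 * ∑ j, B2 i j := by
      intro i
      rw [Finset.mul_sum]
      exact Finset.sum_le_sum fun j _ => by
        nlinarith [mul_nonneg (hB2 i j) (show (0:ℝ) ≤ 3 - x2 t j by linarith [hx2ub j])]
    have hCw : (0:ℝ) ≤ C * f t := mul_nonneg hC0 hw0
    rcases k with _ | ⟨i, c⟩
    · simp only [hD_def, biD]
      positivity
    · fin_cases c
      · -- constraint -x1 i active
        simp only [hg_def, biG] at hk
        simp only [hD_def, biD, hK_def]
        norm_num at hk ⊢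
        have h1 : x1 t i = -f t := by linarith
        have h2 : x2 t i ≤ 1 + 2 * f t := by have := hx12 i; linarith
        have h3 : -x2 t i ≤ f t := hx2 i
        have hb0 := hsum1 i
        have hbC := hb1C i
        have hSl := hS1lb i
        have hSu := hS1ub i
        have hd0 := hδ1 i
        have hwb : (0:ℝ) ≤ f t * ∑ j, B1 i j := mul_nonneg hw0 hb0
        have hprod : (0:ℝ) ≤ (1 - x1 t i - x2 t i + f t) *
            ((∑ j, B1 i j * x1 t j) + f t * ∑ j, B1 i j) :=
          mul_nonneg (by linarith) (by linarith)
        have hB' : (1 - x1 t i - x2 t i) * (f t * ∑ j, B1 i j) ≤ 3 * (f t * ∑ j, B1 i j) :=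
          mul_le_mul_of_nonneg_right (by linarith) hwb
        have hCc : f t * (∑ j, B1 i j * x1 t j) ≤ f t * (3 * ∑ j, B1 i j) :=
          mul_le_mul_of_nonneg_left hSu hw0
        have hDD : f t * (f t * ∑ j, B1 i j) ≤ 1 * (f t * ∑ j, B1 i j) :=
          mul_le_mul_of_nonneg_right ht hwb
        have hE : f t * (∑ j, B1 i j) ≤ f t * C := mul_le_mul_of_nonneg_left hbC hw0
        have hd1w : δ1 i * x1 t i ≤ δ1 i * 0 := by
          rw [h1]; exact mul_le_mul_of_nonneg_left (by linarith) hd0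
        have hCw' : (0:ℝ) ≤ C * f t := mul_nonneg hC0 hw0
        nlinarith [hprod, hB', hCc, hDD, hE, hd1w, hCw']
      · -- constraint -x2 i active
        simp only [hg_def, biG] at hk
        simp only [hD_def, biD, hK_def]
        norm_num at hk ⊢
        have h1 : x2 t i = -f t := by linarith
        have h2 : x1 t i ≤ 1 + 2 * f t := by have := hx12 i; linarith
        have h3 : -x1 t i ≤ f t := hx1 i
        have hb0 := hsum2 i
        have hbC := hb2C i
        have hSl := hS2lb i
        have hSu := hS2ub i
        have hd0 := hδ2 i
        have hwb : (0:ℝ) ≤ f t * ∑ j, B2 i j := mul_nonneg hw0 hb0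
        have hprod : (0:ℝ) ≤ (1 - x1 t i - x2 t i + f t) *
            ((∑ j, B2 i j * x2 t j) + f t * ∑ j, B2 i j) :=
          mul_nonneg (by linarith) (by linarith)
        have hB' : (1 - x1 t i - x2 t i) * (f t * ∑ j, B2 i j) ≤ 3 * (f t * ∑ j, B2 i j) :=
          mul_le_mul_of_nonneg_right (by linarith) hwb
        have hCc : f t * (∑ j, B2 i j * x2 t j) ≤ f t * (3 * ∑ j, B2 i j) :=
          mul_le_mul_of_nonneg_left hSu hw0
        have hDD : f t * (f t * ∑ j, B2 i j) ≤ 1 * (f t * ∑ j, B2 i j) :=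
          mul_le_mul_of_nonneg_right ht hwb
        have hE : f t * (∑ j, B2 i j) ≤ f t * C := mul_le_mul_of_nonneg_left hbC hw0
        have hd2w : δ2 i * x2 t i ≤ δ2 i * 0 := by
          rw [h1]; exact mul_le_mul_of_nonneg_left (by linarith) hd0
        have hCw' : (0:ℝ) ≤ C * f t := mul_nonneg hC0 hw0
        nlinarith [hprod, hB', hCc, hDD, hE, hd2w, hCw']
      · -- constraint x1 i + x2 i - 1 active
        simp only [hg_def, biG] at hk
        simp only [hD_def, biD, hK_def]
        norm_num at hk ⊢
        have h1 : 1 - x1 t i - x2 t i = -f t := by linarith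
        have hb10 := hsum1 i
        have hb20 := hsum2 i
        have hd10 := hδ1 i
        have hd20 := hδ2 i
        rw [h1]
        have hwb1 : (0:ℝ) ≤ f t * ∑ j, B1 i j := mul_nonneg hw0 (hsum1 i)
        have hwb2 : (0:ℝ) ≤ f t * ∑ j, B2 i j := mul_nonneg hw0 (hsum2 i)
        have ha1 : f t * (-(f t * ∑ j, B1 i j)) ≤ f t * ∑ j, B1 i j * x1 t j :=
          mul_le_mul_of_nonneg_left (hS1lb i) hw0
        have ha2 : f t * (-(f t * ∑ j, B2 i j)) ≤ f t * ∑ j, B2 i j * x2 t j :=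
          mul_le_mul_of_nonneg_left (hS2lb i) hw0
        have hb1 : f t * (f t * ∑ j, B1 i j) ≤ 1 * (f t * ∑ j, B1 i j) :=
          mul_le_mul_of_nonneg_right ht hwb1
        have hb2 : f t * (f t * ∑ j, B2 i j) ≤ 1 * (f t * ∑ j, B2 i j) :=
          mul_le_mul_of_nonneg_right ht hwb2
        have hc1 : f t * (∑ j, B1 i j) ≤ f t * C := mul_le_mul_of_nonneg_left (hb1C i) hw0
        have hc2 : f t * (∑ j, B2 i j) ≤ f t * C := mul_le_mul_of_nonneg_left (hb2C i) hw0
        have he1 : δ1 i * (-x1 t i) ≤ δ1 i * f t := mul_le_mul_of_nonneg_left (hx1 i) hd10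
        have he2 : δ2 i * (-x2 t i) ≤ δ2 i * f t := mul_le_mul_of_nonneg_left (hx2 i) hd20
        have hf1 : δ1 i * f t ≤ C * f t := mul_le_mul_of_nonneg_right (hd1C i) hw0
        have hf2 : δ2 i * f t ≤ C * f t := mul_le_mul_of_nonneg_right (hd2C i) hw0
        have hCw' : (0:ℝ) ≤ C * f t := mul_nonneg hC0 hw0
        nlinarith [ha1, ha2, hb1, hb2, hc1, hc2, he1, he2, hf1, hf2, hCw']
  -- the argmax set is nonempty, defining the Dini derivative function
  have hargne : ∀ s : ℝ,
      ((Finset.univ : Finset (Option (Fin n × Fin 3))).filter (fun k => g k s = f s)).Nonempty := by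
    intro s
    obtain ⟨k, hk, hks⟩ := Finset.exists_mem_eq_sup' hne (fun j => g j s)
    exact ⟨k, Finset.mem_filter.2 ⟨hk, hks.symm⟩⟩
  set f' : ℝ → ℝ := fun s =>
    ((Finset.univ : Finset (Option (Fin n × Fin 3))).filter
      (fun k => g k s = f s)).sup' (hargne s) (fun k => D k s) with hf'_def
  -- local invariance
  have loc : ∀ a, f a ≤ 0 → ∃ b, a < b ∧ ∀ t ∈ Icc a b, f t ≤ 0 := by
    intro a ha
    have h1 : ∀ᶠ t in 𝓝 a, f t < 1 :=
      (hfc.continuousAt (x := a)).eventually_lt_const (by linarith)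
    obtain ⟨ε, hε, hball⟩ := Metric.eventually_nhds_iff.1 h1
    refine ⟨a + ε / 2, by linarith, ?_⟩
    have hb1 : ∀ t ∈ Icc a (a + ε / 2), f t ≤ 1 := by
      intro s hs
      refine le_of_lt (hball ?_)
      rw [Real.dist_eq, abs_lt]
      constructor <;> [linarith [hs.1]; linarith [hs.2]]
    have hgron := le_gronwallBound_of_liminf_deriv_right_le (f := f) (f' := f')
      (δ := 0) (K := K) (ε := 0) (a := a) (b := a + ε / 2) hfc.continuousOn
      ?_ ha ?_
    · intro s hs
      have := hgron s hs
      rwa [gronwallBound_ε0_δ0] at this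
    · intro s _ r hr
      refine Eventually.frequently ?_
      have : ∀ k, g k s = Finset.univ.sup' hne (fun j => g j s) → D k s < r := by
        intro k hks
        refine lt_of_le_of_lt ?_ hr
        exact Finset.le_sup' (f := fun k => D k s) (Finset.mem_filter.2 ⟨Finset.mem_univ k, hks⟩)
      have hd := dini_sup_aux hne g (fun k => D k s) s (fun k => hderiv k s) r this
      simpa [hf_def] using hd
    · intro s hs
      rw [add_zero]
      refine Finset.sup'_le _ _ ?_
      intro k hkf
      exact key s (hb1 s ⟨hs.1, le_of_lt hs.2⟩) k (Finset.mem_filter.1 hkf).2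
  -- global invariance up to any time t
  intro t ht
  have hsub : Icc (0:ℝ) t ⊆ {s | f s ≤ 0} := by
    refine IsClosed.Icc_subset_of_forall_exists_gt
      (((isClosed_le hfc continuous_const).inter isClosed_Icc)) ?_ ?_
    · show f 0 ≤ 0
      refine Finset.sup'_le _ _ ?_
      rintro (_ | ⟨i, c⟩) _
      · simp [hg_def, biG]
      · obtain ⟨h1, h2, h3⟩ := hinit i
        fin_cases c <;> simp [hg_def, biG] <;> linarith
    · rintro s ⟨hs, _⟩ y hy
      obtain ⟨b, hb, hloc⟩ := loc s hs
      exact ⟨min b y, hloc (min b y) ⟨le_of_lt (lt_min hb hy), min_le_left _ _⟩,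
        lt_min hb hy, min_le_right _ _⟩
  have hft : f t ≤ 0 := hsub ⟨ht, le_refl t⟩
  intro i
  have e1 : -x1 t i ≤ f t := by
    have := hg_le_f (some (i, 0)) t
    simpa [hg_def, biG] using this
  have e2 : -x2 t i ≤ f t := by
    have := hg_le_f (some (i, 1)) t
    simpa [hg_def, biG] using this
  have e3 : x1 t i + x2 t i - 1 ≤ f t := by
    have := hg_le_f (some (i, 2)) t
    simpa [hg_def, biG] using this
  exact ⟨by linarith, by linarith, by linarith⟩
end

section
/- Consider the single-virus ODE ż_i = -δ_i z_i + (1 - z_i) Σ_j β_{ij} z_j with δ_i ≥ 0 and B = (β_{ij}) nonnegative and irreducible. If z* is a nonzero equilibrium with z* ∈ [0,1]^n, then every entry of z* is strictly positive. -/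
theorem stmt4 {n : ℕ} (δ : Fin n → ℝ) (B : Matrix (Fin n) (Fin n) ℝ)
    (hδ : ∀ i, 0 ≤ δ i) (hB : ∀ i j, 0 ≤ B i j) (hirr : Irred B)
    (z : Fin n → ℝ) (hbox : ∀ i, z i ∈ Set.Icc (0 : ℝ) 1) (hz0 : z ≠ 0)
    (heq : ∀ i, -δ i * z i + (1 - z i) * ∑ j, B i j * z j = 0) :
    ∀ i, 0 < z i := by
  have hterm : ∀ i, z i = 0 → ∀ j, B i j * z j = 0 := by
    intro i hzi j
    have hs : ∑ j, B i j * z j = 0 := by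
      have h := heq i
      rw [hzi] at h; simpa using h
    have hnn : ∀ j ∈ Finset.univ, 0 ≤ B i j * z j :=
      fun j _ => mul_nonneg (hB i j) (hbox j).1
    exact (Finset.sum_eq_zero_iff_of_nonneg hnn).mp hs j (Finset.mem_univ j)
  intro i
  rcases lt_or_eq_of_le (hbox i).1 with h | h
  · exact h
  exfalso
  obtain ⟨j0, hj0⟩ := Function.ne_iff.mp hz0
  obtain ⟨m, c, hc0, hcm, hedge⟩ := hirr i j0
  have key : ∀ k, z (c (m - k)) = 0 := by
    intro k
    induction k with
    | zero => simpa [hcm] using h.symm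
    | succ k ih =>
      rcases Nat.eq_zero_or_pos (m - k) with h0 | hpos
      · have h1 : m - (k + 1) = 0 := by omega
        rw [h1]; rw [h0] at ih; exact ih
      · have hlt : m - (k + 1) < m := by omega
        have hstep : m - k = (m - (k + 1)) + 1 := by omega
        have h2 := hterm (c (m - k)) ih (c (m - (k + 1)))
        rw [hstep] at h2
        rcases mul_eq_zero.mp h2 with h1 | h1
        · exact absurd h1 (ne_of_gt (hedge (m - (k + 1)) hlt))
        · exact h1
  have hz := key m
  simp only [Nat.sub_self, hc0] at hz
  exact hj0 hz
end

section
/- Consider the single-virus ODE with δ_i ≥ 0, B nonnegative and irreducible, and s(-D + B) > 0. Then the nonzero equilibrium in [0,1]^n is unique: if x and y are both nonzero equilibria in [0,1]^n, then x = y. -/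
/-- Any nonzero equilibrium in the box is strictly positive. -/
lemma equil_pos {n : ℕ} (δ : Fin n → ℝ) (B : Matrix (Fin n) (Fin n) ℝ)
    (hB : ∀ i j, 0 ≤ B i j) (hirr : Irred B)
    (x : Fin n → ℝ) (hxbox : ∀ i, x i ∈ Set.Icc (0 : ℝ) 1) (hx0 : x ≠ 0)
    (hxeq : ∀ i, -δ i * x i + (1 - x i) * ∑ j, B i j * x j = 0) :
    ∀ i, 0 < x i := by
  obtain ⟨k, hk⟩ := Function.ne_iff.mp hx0
  have hxk : 0 < x k := lt_of_le_of_ne (hxbox k).1 (Ne.symm hk)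
  have key : ∀ p, x p = 0 → ∀ j, 0 < B p j → x j = 0 := by
    intro p hp j hj
    have h := hxeq p
    rw [hp] at h
    simp only [mul_zero, neg_mul, neg_zero, sub_zero, zero_add, one_mul] at h
    have h2 := (Finset.sum_eq_zero_iff_of_nonneg
      (fun j _ => mul_nonneg (hB p j) (hxbox j).1)).mp h j (Finset.mem_univ j)
    have := (hxbox j).1
    nlinarith
  intro i
  rcases lt_or_eq_of_le (hxbox i).1 with h | h
  · exact h
  exfalso
  obtain ⟨m, c, hc0, hcm, hedge⟩ := hirr i k
  have hz : ∀ t, t ≤ m → x (c (m - t)) = 0 := by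
    intro t
    induction t with
    | zero =>
      intro _
      simpa [hcm] using h.symm
    | succ t ih =>
      intro ht
      have h1 : x (c (m - t)) = 0 := ih (by omega)
      have he : m - t = (m - (t + 1)) + 1 := by omega
      have hlt : m - (t + 1) < m := by omega
      have hed := hedge _ hlt
      exact key _ (by rw [← he]; exact h1) _ hed
  have hzk := hz m le_rfl
  simp only [Nat.sub_self, hc0] at hzk
  exact absurd hzk (ne_of_gt hxk)

/-- Comparison lemma: any positive equilibrium is ≤ any other, assuming every row
of `B` has a positive entry. -/
lemma equil_le {n : ℕ} (δ : Fin n → ℝ) (B : Matrix (Fin n) (Fin n) ℝ)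
    (hB : ∀ i j, 0 ≤ B i j) (hrow : ∀ i, ∃ j, 0 < B i j)
    (x y : Fin n → ℝ)
    (hxbox : ∀ i, x i ∈ Set.Icc (0 : ℝ) 1) (hybox : ∀ i, y i ∈ Set.Icc (0 : ℝ) 1)
    (hxpos : ∀ i, 0 < x i) (hypos : ∀ i, 0 < y i)
    (hxeq : ∀ i, -δ i * x i + (1 - x i) * ∑ j, B i j * x j = 0)
    (hyeq : ∀ i, -δ i * y i + (1 - y i) * ∑ j, B i j * y j = 0) :
    ∀ i, x i ≤ y i := by
  intro i0
  obtain ⟨i, -, hi⟩ := Finset.exists_max_image Finset.univ (fun j => x j / y j)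
    ⟨i0, Finset.mem_univ i0⟩
  set κ := x i / y i with hκdef
  have hκpos : 0 < κ := div_pos (hxpos i) (hypos i)
  have hxi : x i = κ * y i := by
    rw [hκdef, div_mul_cancel₀ _ (ne_of_gt (hypos i))]
  have hxj : ∀ j, x j ≤ κ * y j := by
    intro j
    have h1 := hi j (Finset.mem_univ j)
    have h2 : x j / y j * y j ≤ κ * y j :=
      mul_le_mul_of_nonneg_right h1 (hypos j).le
    rwa [div_mul_cancel₀ _ (ne_of_gt (hypos j))] at h2
  suffices hκ : κ ≤ 1 by
    have := hxj i0
    nlinarith [hypos i0]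
  by_contra hκ
  push_neg at hκ
  set S := ∑ j, B i j * y j with hSdef
  have hS : 0 < S := by
    obtain ⟨j0, hj0⟩ := hrow i
    exact Finset.sum_pos' (fun j _ => mul_nonneg (hB i j) (hypos j).le)
      ⟨j0, Finset.mem_univ j0, mul_pos hj0 (hypos j0)⟩
  have hyE : δ i * y i = (1 - y i) * S := by
    have := hyeq i; linarith
  have hT : (∑ j, B i j * x j) ≤ κ * S := by
    rw [hSdef, Finset.mul_sum]
    apply Finset.sum_le_sum
    intro j _
    have := hxj j
    nlinarith [hB i j]
  have hxE : δ i * x i = (1 - x i) * (∑ j, B i j * x j) := by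
    have := hxeq i; linarith
  have h1x : (0 : ℝ) ≤ 1 - x i := by linarith [(hxbox i).2]
  have h1 : κ * (δ i * y i) ≤ (1 - x i) * (κ * S) := by
    have hh : (1 - x i) * (∑ j, B i j * x j) ≤ (1 - x i) * (κ * S) :=
      mul_le_mul_of_nonneg_left hT h1x
    calc κ * (δ i * y i) = δ i * x i := by rw [hxi]; ring
      _ = (1 - x i) * (∑ j, B i j * x j) := hxE
      _ ≤ (1 - x i) * (κ * S) := hh
  have h2 : δ i * y i ≤ (1 - x i) * S := by
    have h3 : κ * (δ i * y i) ≤ κ * ((1 - x i) * S) := by nlinarith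
    exact le_of_mul_le_mul_left h3 hκpos
  have h3 : (1 - y i) * S ≤ (1 - x i) * S := by rw [← hyE]; exact h2
  have h4 : x i ≤ y i := by nlinarith
  nlinarith [hypos i]

theorem stmt6 {n : ℕ} (δ : Fin n → ℝ) (B : Matrix (Fin n) (Fin n) ℝ)
    (hδ : ∀ i, 0 ≤ δ i) (hB : ∀ i j, 0 ≤ B i j) (hirr : Irred B)
    (hs : 0 < spA (-(Matrix.diagonal δ) + B))
    (x y : Fin n → ℝ)
    (hxbox : ∀ i, x i ∈ Set.Icc (0 : ℝ) 1) (hybox : ∀ i, y i ∈ Set.Icc (0 : ℝ) 1)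
    (hx0 : x ≠ 0) (hy0 : y ≠ 0)
    (hxeq : ∀ i, -δ i * x i + (1 - x i) * ∑ j, B i j * x j = 0)
    (hyeq : ∀ i, -δ i * y i + (1 - y i) * ∑ j, B i j * y j = 0) :
    x = y := by
  have hxpos := equil_pos δ B hB hirr x hxbox hx0 hxeq
  have hypos := equil_pos δ B hB hirr y hybox hy0 hyeq
  by_cases hrow : ∀ i, ∃ j, 0 < B i j
  · funext i
    exact le_antisymm
      (equil_le δ B hB hrow x y hxbox hybox hxpos hypos hxeq hyeq i)
      (equil_le δ B hB hrow y x hybox hxbox hypos hxpos hyeq hxeq i)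
  · exfalso
    push_neg at hrow
    obtain ⟨i, hi⟩ := hrow
    have hi0 : ∀ j, B i j = 0 := fun j => le_antisymm (hi j) (hB i j)
    have hall : ∀ j : Fin n, j = i := by
      intro j
      obtain ⟨m, c, hc0, hcm, hedge⟩ := hirr i j
      cases m with
      | zero => rw [← hc0, hcm]
      | succ m =>
        exfalso
        have hed := hedge m (Nat.lt_succ_self m)
        rw [hcm] at hed
        rw [hi0 (c m)] at hed
        exact lt_irrefl 0 hed
    have hSx : (∑ j, B i j * x j) = 0 := by
      apply Finset.sum_eq_zero
      intro j _
      rw [hi0 j, zero_mul]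
    have hδi : δ i = 0 := by
      have h := hxeq i
      rw [hSx] at h
      have hp := hxpos i
      nlinarith
    have hM : -(Matrix.diagonal δ) + B = 0 := by
      ext a b
      have ha := hall a
      have hb := hall b
      subst ha; subst hb
      simp [Matrix.diagonal, hδi, hi0]
    rw [hM] at hs
    have hmap : (0 : Matrix (Fin n) (Fin n) ℝ).map (fun x : ℝ => (x : ℂ)) = 0 := by
      ext a b; simp
    haveI : Nonempty (Fin n) := ⟨i⟩
    unfold spA at hs
    rw [hmap, spectrum.zero_eq, Set.image_singleton] at hs
    simp only [Complex.zero_re, csSup_singleton] at hs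
    exact lt_irrefl 0 hs
end

section
/- Consider the single-virus ODE ż_i = -δ_i z_i + (1 - z_i) Σ_j β_{ij} z_j with δ_i ≥ 0 and B = (β_{ij}) nonnegative and irreducible. If z(0) ∈ [0,1]^n is nonzero, then there exists τ ≥ 0 such that z_i(τ) > 0 for all i ∈ [n]. -/
set_option maxHeartbeats 1000000 in
theorem stmt7 {n : ℕ} (δ : Fin n → ℝ) (B : Matrix (Fin n) (Fin n) ℝ)
    (hδ : ∀ i, 0 ≤ δ i) (hB : ∀ i j, 0 ≤ B i j) (hirr : Irred B)
    (z : ℝ → Fin n → ℝ)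
    (hode : ∀ t i, HasDerivAt (fun s => z s i)
      (-δ i * z t i + (1 - z t i) * ∑ j, B i j * z t j) t)
    (hinit : ∀ i, z 0 i ∈ Set.Icc (0 : ℝ) 1) (hz0 : z 0 ≠ 0) :
    ∃ τ ≥ (0 : ℝ), ∀ i, 0 < z τ i := by
  classical
  have hcont : ∀ i, Continuous fun s => z s i := fun i =>
    continuous_iff_continuousAt.2 fun t => (hode t i).differentiableAt.continuousAt
  have hsumcont : ContinuousOn (fun s => ∑ j, |z s j|) (Set.Icc (0:ℝ) 1) :=
    (continuous_finset_sum Finset.univ fun j _ => (hcont j).abs).continuousOn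
  obtain ⟨s0, hs0, hs0max⟩ :=
    isCompact_Icc.exists_isMaxOn (Set.nonempty_Icc.2 zero_le_one) hsumcont
  set M : ℝ := ∑ j, |z s0 j| with hMdef
  have hM0 : 0 ≤ M := Finset.sum_nonneg fun j _ => abs_nonneg _
  have hM : ∀ s ∈ Set.Icc (0:ℝ) 1, ∀ j, |z s j| ≤ M := fun s hs j =>
    le_trans (Finset.single_le_sum (f := fun j => |z s j|) (fun j _ => abs_nonneg _)
      (Finset.mem_univ j)) (hs0max hs)
  set S : ℝ := ∑ i, ∑ j, B i j with hSdef
  have hS0 : 0 ≤ S := Finset.sum_nonneg fun i _ => Finset.sum_nonneg fun j _ => hB i j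
  have hSb : ∀ i, (∑ j, B i j) ≤ S := fun i =>
    Finset.single_le_sum (fun i _ => Finset.sum_nonneg fun j _ => hB i j) (Finset.mem_univ i)
  set K : ℝ := 1 + (1 + M) * S with hKdef
  -- Step A (barrier): for every ε > 0, z t i ≥ -ε exp(K t) on [0,1]
  have key : ∀ ε : ℝ, 0 < ε → ∀ t ∈ Set.Icc (0:ℝ) 1, ∀ i,
      -(ε * Real.exp (K * t)) ≤ z t i := by
    intro ε hε
    by_contra hcon
    push_neg at hcon
    obtain ⟨tb, htb, ib, hib⟩ := hcon
    set Bad : Set ℝ := {t | t ∈ Set.Icc (0:ℝ) 1 ∧ ∃ i, z t i < -(ε * Real.exp (K * t))}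
      with hBadDef
    have hBadne : Bad.Nonempty := ⟨tb, htb, ib, hib⟩
    have hbdd : BddBelow Bad := ⟨0, fun t ht => ht.1.1⟩
    set t₁ : ℝ := sInf Bad with ht₁def
    have ht₁mem : t₁ ∈ Set.Icc (0:ℝ) 1 :=
      ⟨le_csInf hBadne fun t ht => ht.1.1, le_trans (csInf_le hbdd ⟨htb, ib, hib⟩) htb.2⟩
    have hgood : ∀ j, -(ε * Real.exp (K * t₁)) ≤ z t₁ j := by
      by_contra hg
      push_neg at hg
      obtain ⟨j, hj⟩ := hg
      rcases eq_or_lt_of_le ht₁mem.1 with h0 | h0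
      · have h1 : (0:ℝ) ≤ z t₁ j := h0 ▸ (hinit j).1
        nlinarith [Real.exp_pos (K * t₁)]
      · have hU : IsOpen {t : ℝ | z t j < -(ε * Real.exp (K * t))} :=
          isOpen_lt (hcont j) (by continuity)
        obtain ⟨η, hη, hball⟩ := Metric.isOpen_iff.1 hU t₁ hj
        set t' : ℝ := max 0 (t₁ - η / 2) with ht'
        have h1 : t' < t₁ := max_lt h0 (by linarith)
        have h2 : t' ∈ Set.Icc (0:ℝ) 1 := ⟨le_max_left _ _, le_trans h1.le ht₁mem.2⟩
        have h3 : dist t' t₁ < η := by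
          rw [Real.dist_eq, abs_lt]
          constructor
          · have : t₁ - η / 2 ≤ t' := le_max_right _ _
            linarith
          · linarith
        have h4 : t' ∈ Bad := ⟨h2, j, hball h3⟩
        exact absurd (csInf_le hbdd h4) (not_le.2 h1)
    haveI : Nonempty (Fin n) := ⟨ib⟩
    obtain ⟨i, hfreq⟩ : ∃ i, ∀ η : ℝ, 0 < η →
        ∃ t, t₁ < t ∧ t < t₁ + η ∧ z t i < -(ε * Real.exp (K * t)) := by
      by_contra hno
      push_neg at hno
      choose d hd1 hd2 using hno
      set η : ℝ := Finset.univ.inf' Finset.univ_nonempty d with hηdef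
      have hηpos : 0 < η := (Finset.lt_inf'_iff _).2 fun i _ => hd1 i
      obtain ⟨t, htB, htlt⟩ := (csInf_lt_iff hbdd hBadne).1
        (show sInf Bad < t₁ + η by rw [← ht₁def]; linarith)
      have h1 : t₁ ≤ t := csInf_le hbdd htB
      have h2 : t ≠ t₁ := by
        rintro rfl
        obtain ⟨-, i, hi⟩ := htB
        exact absurd hi (not_lt.2 (hgood i))
      obtain ⟨-, i, hi⟩ := htB
      have h3 : t < t₁ + d i :=
        lt_of_lt_of_le htlt (add_le_add (le_refl t₁) (Finset.inf'_le d (Finset.mem_univ i)))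
      exact absurd hi (not_lt.2 (hd2 i t (lt_of_le_of_ne h1 (Ne.symm h2)) h3))
    have hge : 0 ≤ z t₁ i + ε * Real.exp (K * t₁) := by linarith [hgood i]
    rcases eq_or_lt_of_le hge with heq | hlt
    · -- z t₁ i sits exactly on the barrier; the derivative pushes it up, contradiction
      set b : ℝ := ε * Real.exp (K * t₁) with hbdef
      have hbpos : 0 < b := mul_pos hε (Real.exp_pos _)
      have hzt : z t₁ i = -b := by linarith
      have hbM : b ≤ M := by
        have h5 := hM t₁ ht₁mem i
        rw [hzt, abs_neg, abs_of_pos hbpos] at h5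
        exact h5
      have hSig : -(b * S) ≤ ∑ j, B i j * z t₁ j := by
        have h6 : ∀ j ∈ Finset.univ, B i j * (-b) ≤ B i j * z t₁ j := fun j _ =>
          mul_le_mul_of_nonneg_left (hgood j) (hB i j)
        have h7 : (∑ j, B i j * (-b)) ≤ ∑ j, B i j * z t₁ j := Finset.sum_le_sum h6
        have h8 : (∑ j, B i j * (-b)) = (∑ j, B i j) * (-b) := by
          rw [Finset.sum_mul]
        have h9' : S * (-b) ≤ (∑ j, B i j) * (-b) :=
          mul_le_mul_of_nonpos_right (hSb i) (by linarith)
        linarith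
      have hexp : HasDerivAt (fun s => ε * Real.exp (K * s))
          (ε * (Real.exp (K * t₁) * (K * 1))) t₁ :=
        (((hasDerivAt_id t₁).const_mul K).exp).const_mul ε
      have Hd := (hode t₁ i).add hexp
      have hd0 : 0 < (-δ i * z t₁ i + (1 - z t₁ i) * ∑ j, B i j * z t₁ j)
          + ε * (Real.exp (K * t₁) * (K * 1)) := by
        have hKb : ε * (Real.exp (K * t₁) * (K * 1)) = K * b := by rw [hbdef]; ring
        rw [hzt, hKb, hKdef]
        have h9 : (1 + b) * (-(b * S)) ≤ (1 + b) * ∑ j, B i j * z t₁ j :=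
          mul_le_mul_of_nonneg_left hSig (by linarith)
        have h10 : (1 + M) * (-(b * S)) ≤ (1 + b) * (-(b * S)) :=
          mul_le_mul_of_nonpos_right (by linarith)
            (neg_nonpos.2 (mul_nonneg hbpos.le hS0))
        nlinarith [hδ i, mul_nonneg (hδ i) hbpos.le, h9, h10]
      have hslope := hasDerivAt_iff_tendsto_slope.1 Hd
      have hev : ∀ᶠ t in nhdsWithin t₁ {t₁}ᶜ,
          0 < slope (fun s => z s i + ε * Real.exp (K * s)) t₁ t :=
        hslope.eventually (eventually_gt_nhds hd0)
      rw [eventually_nhdsWithin_iff] at hev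
      obtain ⟨η, hη, hball⟩ := Metric.eventually_nhds_iff.1 hev
      obtain ⟨t, ht1, ht2, htbad⟩ := hfreq η hη
      have hne : t ≠ t₁ := ne_of_gt ht1
      have hdist : dist t t₁ < η := by
        rw [Real.dist_eq, abs_lt]; constructor <;> linarith
      have hsl := hball hdist hne
      rw [slope_def_field] at hsl
      have hd' : 0 < t - t₁ := sub_pos.2 ht1
      have h11 : (0:ℝ) * (t - t₁) <
          ((z t i + ε * Real.exp (K * t)) - (z t₁ i + ε * Real.exp (K * t₁))) := by
        have h11' := (lt_div_iff₀ hd').1 hsl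
        linarith [h11']
      nlinarith [Real.exp_pos (K * t)]
    · -- the barrier is strictly below z at t₁, contradiction with bad points nearby
      have hU : IsOpen {t : ℝ | 0 < z t i + ε * Real.exp (K * t)} :=
        isOpen_lt continuous_const (by continuity)
      obtain ⟨η, hη, hball⟩ := Metric.isOpen_iff.1 hU t₁ hlt
      obtain ⟨t, ht1, ht2, htbad⟩ := hfreq η hη
      have hdist : dist t t₁ < η := by
        rw [Real.dist_eq, abs_lt]; constructor <;> linarith
      have h12 := hball hdist
      simp only [Set.mem_setOf_eq] at h12
      nlinarith [Real.exp_pos (K * t)]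
  -- Step A conclusion: nonnegativity on [0,1]
  have hA : ∀ t ∈ Set.Icc (0:ℝ) 1, ∀ i, 0 ≤ z t i := by
    intro t ht i
    by_contra hneg
    push_neg at hneg
    have hE : 0 < Real.exp (K * t) := Real.exp_pos _
    have h13 := key (-(z t i) / (2 * Real.exp (K * t))) (by apply div_pos (by linarith) (by positivity)) t ht i
    have h14 : (-(z t i) / (2 * Real.exp (K * t))) * Real.exp (K * t) = -(z t i) / 2 := by
      field_simp
    rw [h14] at h13
    linarith
  -- Step B: persistence of positivity
  have hPers : ∀ i (t0 t1 : ℝ), 0 ≤ t0 → t0 ≤ t1 → t1 ≤ 1 → 0 < z t0 i → 0 < z t1 i := by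
    intro i t0 t1 h0 h01 h1 hzpos
    set Ki : ℝ := δ i + M * S with hKidef
    have hexp : ∀ s : ℝ, HasDerivAt (fun s => Real.exp (Ki * s))
        (Real.exp (Ki * s) * (Ki * 1)) s :=
      fun s => ((hasDerivAt_id s).const_mul Ki).exp
    have hg : ∀ s : ℝ, HasDerivAt (fun s => z s i * Real.exp (Ki * s))
        ((-δ i * z s i + (1 - z s i) * ∑ j, B i j * z s j) * Real.exp (Ki * s)
          + z s i * (Real.exp (Ki * s) * (Ki * 1))) s := fun s => (hode s i).mul (hexp s)
    have hmono : MonotoneOn (fun s => z s i * Real.exp (Ki * s)) (Set.Icc t0 t1) := by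
      apply monotoneOn_of_deriv_nonneg (convex_Icc _ _)
      · exact ((hcont i).mul (by continuity)).continuousOn
      · intro x hx
        exact (hg x).differentiableAt.differentiableWithinAt
      · intro x hx
        rw [interior_Icc] at hx
        rw [(hg x).deriv]
        have hxI : x ∈ Set.Icc (0:ℝ) 1 := ⟨le_trans h0 hx.1.le, le_trans hx.2.le h1⟩
        have hz0' : 0 ≤ z x i := hA x hxI i
        have hSig0 : 0 ≤ ∑ j, B i j * z x j :=
          Finset.sum_nonneg fun j _ => mul_nonneg (hB i j) (hA x hxI j)
        have hSigM : ∑ j, B i j * z x j ≤ M * S := by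
          have h15 : (∑ j, B i j * z x j) ≤ ∑ j, B i j * M :=
            Finset.sum_le_sum fun j _ =>
              mul_le_mul_of_nonneg_left (le_trans (le_abs_self _) (hM x hxI j)) (hB i j)
          have h16 : (∑ j, B i j * M) = (∑ j, B i j) * M := by rw [Finset.sum_mul]
          nlinarith [hSb i]
        have hE := Real.exp_pos (Ki * x)
        have h17 : 0 ≤ (-δ i * z x i + (1 - z x i) * ∑ j, B i j * z x j) + z x i * Ki := by
          rw [hKidef]
          nlinarith [mul_nonneg hz0' (sub_nonneg.2 hSigM)]
        nlinarith [mul_nonneg h17 hE.le]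
    have h18 : z t0 i * Real.exp (Ki * t0) ≤ z t1 i * Real.exp (Ki * t1) :=
      hmono (Set.left_mem_Icc.2 h01) (Set.right_mem_Icc.2 h01) h01
    have hE0 := Real.exp_pos (Ki * t0)
    have hE1 := Real.exp_pos (Ki * t1)
    by_contra hc
    push_neg at hc
    nlinarith [mul_pos hzpos hE0, mul_nonneg (neg_nonneg.2 hc) hE1.le]
  -- Final assembly
  refine ⟨1, zero_le_one, ?_⟩
  by_contra hcon
  push_neg at hcon
  obtain ⟨i, hi⟩ := hcon
  have h1mem : (1:ℝ) ∈ Set.Icc (0:ℝ) 1 := Set.right_mem_Icc.2 zero_le_one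
  have hi0 : z 1 i = 0 := le_antisymm hi (hA 1 h1mem i)
  have hZi : ∀ t ∈ Set.Ioo (0:ℝ) 1, z t i = 0 := by
    intro t ht
    have htI : t ∈ Set.Icc (0:ℝ) 1 := ⟨ht.1.le, ht.2.le⟩
    rcases (hA t htI i).eq_or_lt with h | h
    · exact h.symm
    · exact absurd hi0 (hPers i t 1 ht.1.le ht.2.le le_rfl h).ne'
  have hstep : ∀ i', (∀ t ∈ Set.Ioo (0:ℝ) 1, z t i' = 0) →
      ∀ j, 0 < B i' j → ∀ t ∈ Set.Ioo (0:ℝ) 1, z t j = 0 := by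
    intro i' hZ j hBj t ht
    have hev : (fun s => z s i') =ᶠ[nhds t] fun _ => (0:ℝ) :=
      Filter.eventuallyEq_of_mem (isOpen_Ioo.mem_nhds ht) hZ
    have hd0 : HasDerivAt (fun s => z s i') 0 t :=
      (hasDerivAt_const t (0:ℝ)).congr_of_eventuallyEq hev
    have heq := (hode t i').unique hd0
    have hz0' : z t i' = 0 := hZ t ht
    rw [hz0'] at heq
    have hSig : ∑ k, B i' k * z t k = 0 := by linarith [heq]
    have htI : t ∈ Set.Icc (0:ℝ) 1 := ⟨ht.1.le, ht.2.le⟩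
    have h19 := (Finset.sum_eq_zero_iff_of_nonneg
      (fun k _ => mul_nonneg (hB i' k) (hA t htI k))).1 hSig j (Finset.mem_univ j)
    rcases mul_eq_zero.1 h19 with h | h
    · exact absurd h hBj.ne'
    · exact h
  obtain ⟨j0, hj0⟩ := Function.ne_iff.1 hz0
  have hj0pos : 0 < z 0 j0 := lt_of_le_of_ne (hinit j0).1 (Ne.symm hj0)
  obtain ⟨m, c, hc0, hcm, hedge⟩ := hirr i j0
  have hchain : ∀ k, k ≤ m → ∀ t ∈ Set.Ioo (0:ℝ) 1, z t (c (m - k)) = 0 := by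
    intro k
    induction k with
    | zero =>
      intro _ t ht
      have := hZi t ht
      simpa [Nat.sub_zero, hcm] using this
    | succ k ih =>
      intro hk t ht
      have hk' : k ≤ m := Nat.le_of_succ_le hk
      have hmk : m - k = (m - (k+1)) + 1 := by omega
      have hB' : 0 < B (c (m - k)) (c (m - (k+1))) := by
        rw [hmk]; exact hedge _ (by omega)
      exact hstep (c (m - k)) (fun t ht => ih hk' t ht) (c (m - (k+1))) hB' t ht
  have hzj0 : z (1/2) j0 = 0 := by
    have := hchain m le_rfl (1/2) (by norm_num)
    rwa [Nat.sub_self, hc0] at this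
  have := hPers j0 0 (1/2) le_rfl (by norm_num) (by norm_num) hj0pos
  rw [hzj0] at this
  exact lt_irrefl _ this
end

section
/- Suppose both viruses spread over the same strongly connected directed graph with homogeneous rates: δ¹_i = δ¹ > 0, δ²_i = δ² > 0 for all i, β¹_{ij} = β¹ a_{ij}, β²_{ij} = β² a_{ij} with β¹, β² > 0 and A = (a_{ij}) the irreducible 0-1 adjacency matrix. If (x̃¹, x̃²) is an equilibrium of the bi-virus system with x̃¹ > 0 and x̃² > 0 (both nonzero), then δ¹/β¹ = δ²/β². -/
/-- Positivity propagates along paths of an irreducible matrix. -/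
lemma pos_of_irred {n : ℕ} (A : Matrix (Fin n) (Fin n) ℝ) (hirr : Irred A)
    (x : Fin n → ℝ) (hx0 : ∀ i, 0 ≤ x i) (hxne : x ≠ 0)
    (hprop : ∀ i, x i = 0 → ∀ j, 0 < A i j → x j = 0) : ∀ i, 0 < x i := by
  obtain ⟨j0, hj0⟩ := Function.ne_iff.mp hxne
  have hj0pos : 0 < x j0 := lt_of_le_of_ne (hx0 j0) (Ne.symm hj0)
  intro i
  obtain ⟨m, c, hc0, hcm, hstep⟩ := hirr i j0
  have key : ∀ k, k ≤ m → 0 < x (c k) := by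
    intro k
    induction k with
    | zero => intro _; rw [hc0]; exact hj0pos
    | succ k ih =>
      intro hk
      have hkm : k < m := hk
      have hxk := ih hkm.le
      rcases (hx0 (c (k + 1))).lt_or_eq with h | h
      · exact h
      · exact absurd (hprop (c (k + 1)) h.symm (c k) (hstep k hkm)) hxk.ne'
  have := key m le_rfl
  rwa [hcm] at this

/-- Core ratio inequality at the maximizer of `x2/x1`. -/
lemma aux_ineq {n : ℕ} (A : Matrix (Fin n) (Fin n) ℝ) (hn : 0 < n)
    (hApos : ∀ i j, 0 ≤ A i j)
    (δ1 δ2 β1 β2 : ℝ) (hδ1 : 0 < δ1) (hβ1 : 0 < β1) (hβ2 : 0 < β2)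
    (x1 x2 : Fin n → ℝ) (hx1 : ∀ i, 0 < x1 i) (hx2 : ∀ i, 0 < x2 i)
    (hs : ∀ i, x1 i + x2 i < 1)
    (e1 : ∀ i, δ1 * x1 i = (1 - x1 i - x2 i) * (β1 * ∑ j, A i j * x1 j))
    (e2 : ∀ i, δ2 * x2 i = (1 - x1 i - x2 i) * (β2 * ∑ j, A i j * x2 j)) :
    δ2 * β1 ≤ δ1 * β2 := by
  haveI : Nonempty (Fin n) := ⟨⟨0, hn⟩⟩
  obtain ⟨i, -, hmax⟩ := Finset.exists_max_image Finset.univ (fun j => x2 j / x1 j)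
    ⟨⟨0, hn⟩, Finset.mem_univ _⟩
  set r : ℝ := x2 i / x1 i with hr_def
  have hr : 0 < r := div_pos (hx2 i) (hx1 i)
  have hmax' : ∀ j, x2 j ≤ r * x1 j := by
    intro j
    have := hmax j (Finset.mem_univ j)
    calc x2 j = (x2 j / x1 j) * x1 j := (div_mul_cancel₀ (x2 j) (hx1 j).ne').symm
    _ ≤ r * x1 j := mul_le_mul_of_nonneg_right this (hx1 j).le
  have hxri : x2 i = r * x1 i := by
    rw [hr_def, div_mul_cancel₀ (x2 i) (hx1 i).ne']
  set S1 : ℝ := ∑ j, A i j * x1 j with hS1_def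
  set S2 : ℝ := ∑ j, A i j * x2 j with hS2_def
  have ht : 0 < 1 - x1 i - x2 i := by have := hs i; linarith
  have hS2le : S2 ≤ r * S1 := by
    rw [hS2_def, hS1_def, Finset.mul_sum]
    refine Finset.sum_le_sum fun j _ => ?_
    calc A i j * x2 j ≤ A i j * (r * x1 j) :=
          mul_le_mul_of_nonneg_left (hmax' j) (hApos i j)
      _ = r * (A i j * x1 j) := by ring
  have hS1pos : 0 < S1 := by
    have he := e1 i
    have hlhs : 0 < δ1 * x1 i := mul_pos hδ1 (hx1 i)
    nlinarith [mul_pos ht hβ1]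
  -- From e2 and the max inequality:
  have h1 : δ2 * x2 i ≤ (1 - x1 i - x2 i) * (β2 * (r * S1)) := by
    rw [e2 i, ← hS2_def]
    exact mul_le_mul_of_nonneg_left (mul_le_mul_of_nonneg_left hS2le hβ2.le) ht.le
  -- cancel r
  have h2 : δ2 * x1 i ≤ (1 - x1 i - x2 i) * (β2 * S1) := by
    have h1' : r * (δ2 * x1 i) ≤ r * ((1 - x1 i - x2 i) * (β2 * S1)) := by
      calc r * (δ2 * x1 i) = δ2 * x2 i := by rw [hxri]; ring
      _ ≤ (1 - x1 i - x2 i) * (β2 * (r * S1)) := h1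
      _ = r * ((1 - x1 i - x2 i) * (β2 * S1)) := by ring
    exact le_of_mul_le_mul_left h1' hr
  -- use e1
  have he1 : δ1 * x1 i = (1 - x1 i - x2 i) * (β1 * S1) := by rw [e1 i, hS1_def]
  have h3 : δ2 * x1 i * (β1 * S1) ≤ δ1 * x1 i * (β2 * S1) := by
    have hmul := mul_le_mul_of_nonneg_right h2 (mul_pos hβ1 hS1pos).le
    have hre : (1 - x1 i - x2 i) * (β2 * S1) * (β1 * S1) = δ1 * x1 i * (β2 * S1) := by
      rw [he1]; ring
    exact hmul.trans_eq hre
  have hpos : 0 < x1 i * S1 := mul_pos (hx1 i) hS1pos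
  have h4 : δ2 * β1 * (x1 i * S1) ≤ δ1 * β2 * (x1 i * S1) := by
    calc δ2 * β1 * (x1 i * S1) = δ2 * x1 i * (β1 * S1) := by ring
      _ ≤ δ1 * x1 i * (β2 * S1) := h3
      _ = δ1 * β2 * (x1 i * S1) := by ring
  exact le_of_mul_le_mul_right h4 hpos

theorem stmt8 {n : ℕ} (A : Matrix (Fin n) (Fin n) ℝ)
    (hA01 : ∀ i j, A i j = 0 ∨ A i j = 1) (hirr : Irred A)
    (δ1 δ2 β1 β2 : ℝ) (hδ1 : 0 < δ1) (hδ2 : 0 < δ2) (hβ1 : 0 < β1) (hβ2 : 0 < β2)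
    (x1 x2 : Fin n → ℝ)
    (hdom : ∀ i, 0 ≤ x1 i ∧ 0 ≤ x2 i ∧ x1 i + x2 i ≤ 1)
    (hx1 : x1 ≠ 0) (hx2 : x2 ≠ 0)
    (heq1 : ∀ i, -δ1 * x1 i + (1 - x1 i - x2 i) * ∑ j, β1 * A i j * x1 j = 0)
    (heq2 : ∀ i, -δ2 * x2 i + (1 - x1 i - x2 i) * ∑ j, β2 * A i j * x2 j = 0) :
    δ1 / β1 = δ2 / β2 := by
  rcases Nat.eq_zero_or_pos n with hn | hn
  · subst hn
    exact absurd (funext fun i => i.elim0) hx1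
  have hApos : ∀ i j, 0 ≤ A i j := by
    intro i j; rcases hA01 i j with h | h <;> simp [h]
  -- 1 - x1 - x2 > 0 everywhere
  have hs : ∀ i, x1 i + x2 i < 1 := by
    intro i
    rcases lt_or_ge (x1 i + x2 i) 1 with h | h
    · exact h
    have hseq : 1 - x1 i - x2 i = 0 := by
      have := (hdom i).2.2; linarith
    have h1 := heq1 i; have h2 := heq2 i
    rw [hseq, zero_mul] at h1 h2
    have hx1i : x1 i = 0 := by nlinarith
    have hx2i : x2 i = 0 := by nlinarith
    linarith
  -- equations in product form
  have e1 : ∀ i, δ1 * x1 i = (1 - x1 i - x2 i) * (β1 * ∑ j, A i j * x1 j) := by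
    intro i
    have h := heq1 i
    have hsum : ∑ j, β1 * A i j * x1 j = β1 * ∑ j, A i j * x1 j := by
      rw [Finset.mul_sum]; exact Finset.sum_congr rfl fun j _ => by ring
    rw [hsum] at h; linarith
  have e2 : ∀ i, δ2 * x2 i = (1 - x1 i - x2 i) * (β2 * ∑ j, A i j * x2 j) := by
    intro i
    have h := heq2 i
    have hsum : ∑ j, β2 * A i j * x2 j = β2 * ∑ j, A i j * x2 j := by
      rw [Finset.mul_sum]; exact Finset.sum_congr rfl fun j _ => by ring
    rw [hsum] at h; linarith
  -- strict positivity of x1 and x2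
  have hx1pos : ∀ i, 0 < x1 i := by
    refine pos_of_irred A hirr x1 (fun i => (hdom i).1) hx1 ?_
    intro i hi j hAij
    have h : (1 - x1 i - x2 i) * (β1 * ∑ j, A i j * x1 j) = 0 := by
      rw [← e1 i, hi, mul_zero]
    have hti : 0 < 1 - x1 i - x2 i := by have := hs i; linarith
    have hsum0 : ∑ j, A i j * x1 j = 0 := by
      rcases mul_eq_zero.mp h with h' | h'
      · exact absurd h' hti.ne'
      · rcases mul_eq_zero.mp h' with h'' | h''
        · exact absurd h'' hβ1.ne'
        · exact h''
    have := (Finset.sum_eq_zero_iff_of_nonneg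
      (fun j _ => mul_nonneg (hApos i j) (hdom j).1)).mp hsum0 j (Finset.mem_univ j)
    rcases mul_eq_zero.mp this with h' | h'
    · exact absurd h' hAij.ne'
    · exact h'
  have hx2pos : ∀ i, 0 < x2 i := by
    refine pos_of_irred A hirr x2 (fun i => (hdom i).2.1) hx2 ?_
    intro i hi j hAij
    have h : (1 - x1 i - x2 i) * (β2 * ∑ j, A i j * x2 j) = 0 := by
      rw [← e2 i, hi, mul_zero]
    have hti : 0 < 1 - x1 i - x2 i := by have := hs i; linarith
    have hsum0 : ∑ j, A i j * x2 j = 0 := by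
      rcases mul_eq_zero.mp h with h' | h'
      · exact absurd h' hti.ne'
      · rcases mul_eq_zero.mp h' with h'' | h''
        · exact absurd h'' hβ2.ne'
        · exact h''
    have := (Finset.sum_eq_zero_iff_of_nonneg
      (fun j _ => mul_nonneg (hApos i j) (hdom j).2.1)).mp hsum0 j (Finset.mem_univ j)
    rcases mul_eq_zero.mp this with h' | h'
    · exact absurd h' hAij.ne'
    · exact h'
  -- two inequalities
  have hle1 : δ2 * β1 ≤ δ1 * β2 :=
    aux_ineq A hn hApos δ1 δ2 β1 β2 hδ1 hβ1 hβ2 x1 x2 hx1pos hx2pos hs e1 e2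
  have hle2 : δ1 * β2 ≤ δ2 * β1 :=
    aux_ineq A hn hApos δ2 δ1 β2 β1 hδ2 hβ2 hβ1 x2 x1 hx2pos hx1pos
      (fun i => by have := hs i; linarith)
      (fun i => by have := e2 i; linarith [e2 i]; )
      (fun i => by have := e1 i; linarith)
  rw [div_eq_div_iff hβ1.ne' hβ2.ne']
  linarith
end

section
/- If (x̃¹, x̃²) is an equilibrium of the bi-virus system with homogeneous rates (δ¹_i = δ¹ > 0, β¹_{ij} = β¹ a_{ij}, etc., same strongly connected graph A), then x̃¹ + x̃² ≪ 1, i.e., x̃¹_i + x̃²_i < 1 for every i. -/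
theorem stmt9 {n : ℕ} (A : Matrix (Fin n) (Fin n) ℝ)
    (hA01 : ∀ i j, A i j = 0 ∨ A i j = 1) (hAloop : ∀ i, A i i = 1) (hirr : Irred A)
    (δ1 δ2 β1 β2 : ℝ) (hδ1 : 0 < δ1) (hδ2 : 0 < δ2) (hβ1 : 0 < β1) (hβ2 : 0 < β2)
    (x1 x2 : Fin n → ℝ)
    (hdom : ∀ i, 0 ≤ x1 i ∧ 0 ≤ x2 i ∧ x1 i + x2 i ≤ 1)
    (heq1 : ∀ i, -δ1 * x1 i + (1 - x1 i - x2 i) * ∑ j, β1 * A i j * x1 j = 0)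
    (heq2 : ∀ i, -δ2 * x2 i + (1 - x1 i - x2 i) * ∑ j, β2 * A i j * x2 j = 0) :
    ∀ i, x1 i + x2 i < 1 := by
  intro i
  obtain ⟨h1, h2, h3⟩ := hdom i
  rcases lt_or_eq_of_le h3 with h | h
  · exact h
  · exfalso
    have hz : 1 - x1 i - x2 i = 0 := by linarith
    have e1 := heq1 i
    have e2 := heq2 i
    rw [hz, zero_mul] at e1 e2
    have hx1 : x1 i = 0 := by
      have := mul_eq_zero.mp (by linarith : δ1 * x1 i = 0)
      rcases this with h' | h'
      · exact absurd h' (ne_of_gt hδ1)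
      · exact h'
    have hx2 : x2 i = 0 := by
      have := mul_eq_zero.mp (by linarith : δ2 * x2 i = 0)
      rcases this with h' | h'
      · exact absurd h' (ne_of_gt hδ2)
      · exact h'
    linarith
end

section
/- Suppose D¹ = D² = D is a positive diagonal matrix and B¹ = B² = B is irreducible nonnegative with s(-D + B) > 0. If (x̃¹, x̃²) is an equilibrium of the bi-virus system with x̃¹ > 0 and x̃² > 0, then x̃¹ ≫ 0, x̃² ≫ 0, the sum x̃¹ + x̃² equals the unique nonzero equilibrium of the single-virus system ż = (-D + B - ZB)z in [0,1]^n, and x̃¹ = α x̃² for some α > 0. -/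
/-- Positivity propagation along paths of an irreducible nonnegative matrix. -/
lemma pos_prop {n : ℕ} (B : Matrix (Fin n) (Fin n) ℝ) (hB : ∀ i j, 0 ≤ B i j)
    (hirr : Irred B) (v : Fin n → ℝ) (hv : ∀ i, 0 ≤ v i) (hvne : v ≠ 0)
    (hzero : ∀ i, v i = 0 → ∑ j, B i j * v j = 0) : ∀ i, 0 < v i := by
  obtain ⟨j, hj⟩ : ∃ j, 0 < v j := by
    by_contra h
    push_neg at h
    exact hvne (funext fun i => le_antisymm (h i) (hv i))
  intro i
  obtain ⟨m, c, hc0, hcm, hstep⟩ := hirr i j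
  have key : ∀ k, k ≤ m → 0 < v (c k) := by
    intro k
    induction k with
    | zero => intro _; rw [hc0]; exact hj
    | succ k ih =>
      intro hkm
      have hk : 0 < v (c k) := ih (by omega)
      rcases (hv (c (k+1))).lt_or_eq with h | h
      · exact h
      · exfalso
        have hsum := hzero _ h.symm
        have hterm := (Finset.sum_eq_zero_iff_of_nonneg
          (fun x _ => mul_nonneg (hB _ _) (hv _))).mp hsum (c k) (Finset.mem_univ _)
        nlinarith [hstep k (by omega)]
  have := key m le_rfl
  rwa [hcm] at this

/-- Comparison between two positive equilibria of the single-virus model. -/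
lemma comp_le {n : ℕ} (hn : 0 < n) (δ : Fin n → ℝ) (B : Matrix (Fin n) (Fin n) ℝ)
    (hδ : ∀ i, 0 < δ i) (hB : ∀ i j, 0 ≤ B i j)
    (y z : Fin n → ℝ) (hy0 : ∀ i, 0 < y i) (hy1 : ∀ i, y i < 1)
    (hz0 : ∀ i, 0 < z i) (hz1 : ∀ i, z i < 1)
    (heqy : ∀ i, -δ i * y i + (1 - y i) * ∑ j, B i j * y j = 0)
    (heqz : ∀ i, -δ i * z i + (1 - z i) * ∑ j, B i j * z j = 0) :
    ∀ i, z i ≤ y i := by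
  obtain ⟨i0, -, hmax⟩ := Finset.exists_max_image Finset.univ (fun i => z i / y i)
    ⟨⟨0, hn⟩, Finset.mem_univ _⟩
  set κ := z i0 / y i0 with hκ
  have hκpos : 0 < κ := div_pos (hz0 i0) (hy0 i0)
  have hle : ∀ j, z j ≤ κ * y j := by
    intro j
    have h := hmax j (Finset.mem_univ j)
    calc z j = (z j / y j) * y j := (div_mul_cancel₀ _ (hy0 j).ne').symm
    _ ≤ κ * y j := mul_le_mul_of_nonneg_right h (hy0 j).le
  have hκ1 : κ ≤ 1 := by
    have hy := heqy i0
    have hz := heqz i0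
    have hSz : ∑ j, B i0 j * z j ≤ κ * ∑ j, B i0 j * y j := by
      rw [Finset.mul_sum]
      apply Finset.sum_le_sum
      intro j _
      calc B i0 j * z j ≤ B i0 j * (κ * y j) :=
            mul_le_mul_of_nonneg_left (hle j) (hB _ _)
      _ = κ * (B i0 j * y j) := by ring
    have hzi0 : z i0 = κ * y i0 := (div_mul_cancel₀ _ (hy0 i0).ne').symm
    -- derive z i0 ≤ y i0
    have hSy : (1 - y i0) * ∑ j, B i0 j * y j = δ i0 * y i0 := by linarith
    have hSz' : δ i0 * z i0 ≤ (1 - z i0) * (κ * ∑ j, B i0 j * y j) := by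
      have h1z : 0 < 1 - z i0 := by linarith [hz1 i0]
      nlinarith [hSz]
    have hzy : z i0 ≤ y i0 := by
      have h1y : 0 < 1 - y i0 := by linarith [hy1 i0]
      have key := mul_le_mul_of_nonneg_right hSz' h1y.le
      have key2 : δ i0 * z i0 * (1 - y i0) ≤ (1 - z i0) * κ * (δ i0 * y i0) := by
        calc δ i0 * z i0 * (1 - y i0)
            ≤ (1 - z i0) * (κ * ∑ j, B i0 j * y j) * (1 - y i0) := key
        _ = (1 - z i0) * κ * ((1 - y i0) * ∑ j, B i0 j * y j) := by ring
        _ = (1 - z i0) * κ * (δ i0 * y i0) := by rw [hSy]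
      have hpos : 0 < κ * (δ i0 * y i0) := mul_pos hκpos (mul_pos (hδ i0) (hy0 i0))
      have hk3 : κ * (δ i0 * y i0) * (1 - y i0) ≤ κ * (δ i0 * y i0) * (1 - z i0) := by
        calc κ * (δ i0 * y i0) * (1 - y i0) = δ i0 * (κ * y i0) * (1 - y i0) := by ring
        _ = δ i0 * z i0 * (1 - y i0) := by rw [← hzi0]
        _ ≤ (1 - z i0) * κ * (δ i0 * y i0) := key2
        _ = κ * (δ i0 * y i0) * (1 - z i0) := by ring
      have := (mul_le_mul_iff_right₀ hpos).mp hk3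
      linarith
    calc κ = z i0 / y i0 := hκ
    _ ≤ 1 := div_le_one_of_le₀ hzy (hy0 i0).le
  intro i
  calc z i ≤ κ * y i := hle i
  _ ≤ 1 * y i := mul_le_mul_of_nonneg_right hκ1 (hy0 i).le
  _ = y i := one_mul _

theorem stmt11 {n : ℕ} (δ : Fin n → ℝ) (B : Matrix (Fin n) (Fin n) ℝ)
    (hδ : ∀ i, 0 < δ i) (hB : ∀ i j, 0 ≤ B i j) (hirr : Irred B)
    (hs : 0 < spA (-(Matrix.diagonal δ) + B))
    (x1 x2 : Fin n → ℝ)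
    (hdom : ∀ i, 0 ≤ x1 i ∧ 0 ≤ x2 i ∧ x1 i + x2 i ≤ 1)
    (hx1 : x1 ≠ 0) (hx2 : x2 ≠ 0)
    (heq1 : ∀ i, -δ i * x1 i + (1 - x1 i - x2 i) * ∑ j, B i j * x1 j = 0)
    (heq2 : ∀ i, -δ i * x2 i + (1 - x1 i - x2 i) * ∑ j, B i j * x2 j = 0) :
    (∀ i, 0 < x1 i) ∧ (∀ i, 0 < x2 i) ∧
    (∀ z : Fin n → ℝ, (∀ i, z i ∈ Set.Icc (0 : ℝ) 1) → z ≠ 0 →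
      (∀ i, -δ i * z i + (1 - z i) * ∑ j, B i j * z j = 0) →
      z = fun i => x1 i + x2 i) ∧
    ∃ α > (0 : ℝ), x1 = α • x2 := by
  have hn : 0 < n := by
    rcases Nat.eq_zero_or_pos n with h | h
    · subst h; exact absurd (funext fun i => i.elim0) hx1
    · exact h
  -- strict bound x1 + x2 < 1
  have hy1lt : ∀ i, x1 i + x2 i < 1 := by
    intro i
    rcases lt_or_eq_of_le (hdom i).2.2 with h | h
    · exact h
    · exfalso
      have h0 : (1 : ℝ) - x1 i - x2 i = 0 := by linarith
      have e1 := heq1 i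
      have e2 := heq2 i
      rw [h0, zero_mul, add_zero] at e1 e2
      have hx1i : x1 i = 0 := by nlinarith [hδ i, (hdom i).1]
      have hx2i : x2 i = 0 := by nlinarith [hδ i, (hdom i).2.1]
      rw [hx1i, hx2i] at h; norm_num at h
  have hfac : ∀ i, 0 < 1 - x1 i - x2 i := fun i => by linarith [hy1lt i]
  -- strict positivity of x1 and x2
  have hp1 : ∀ i, 0 < x1 i := by
    apply pos_prop B hB hirr x1 (fun i => (hdom i).1) hx1
    intro i h0
    have e := heq1 i
    rw [h0, mul_zero, zero_add] at e
    have hpos : (0:ℝ) < 1 - 0 - x2 i := by linarith [hfac i]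
    exact (mul_eq_zero.mp e).resolve_left hpos.ne'
  have hp2 : ∀ i, 0 < x2 i := by
    apply pos_prop B hB hirr x2 (fun i => (hdom i).2.1) hx2
    intro i h0
    have e := heq2 i
    rw [h0, mul_zero, zero_add] at e
    have hpos : (0:ℝ) < 1 - x1 i - 0 := by linarith [hfac i]
    exact (mul_eq_zero.mp e).resolve_left hpos.ne'
  -- the sum is an equilibrium of the single-virus model
  have heqy : ∀ i, -δ i * (x1 i + x2 i) +
      (1 - (x1 i + x2 i)) * ∑ j, B i j * (x1 j + x2 j) = 0 := by
    intro i
    have hsum : ∑ j, B i j * (x1 j + x2 j)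
        = (∑ j, B i j * x1 j) + ∑ j, B i j * x2 j := by
      rw [← Finset.sum_add_distrib]
      exact Finset.sum_congr rfl fun j _ => by ring
    rw [hsum]
    linear_combination (heq1 i) + (heq2 i)
  refine ⟨hp1, hp2, ?_, ?_⟩
  · -- uniqueness
    intro z hzdom hzne heqz
    have hz1 : ∀ i, z i < 1 := by
      intro i
      rcases lt_or_eq_of_le (hzdom i).2 with h | h
      · exact h
      · exfalso
        have e := heqz i
        rw [h] at e
        simp at e
        exact (hδ i).ne' e
    have hz0 : ∀ i, 0 < z i := by
      apply pos_prop B hB hirr z (fun i => (hzdom i).1) hzne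
      intro i h0
      have e := heqz i
      rw [h0, mul_zero, zero_add, sub_zero, one_mul] at e
      exact e
    have h1 := comp_le hn δ B hδ hB (fun i => x1 i + x2 i) z
      (fun i => add_pos (hp1 i) (hp2 i)) hy1lt hz0 hz1 heqy heqz
    have h2 := comp_le hn δ B hδ hB z (fun i => x1 i + x2 i)
      hz0 hz1 (fun i => add_pos (hp1 i) (hp2 i)) hy1lt heqz heqy
    funext i
    exact le_antisymm (h1 i) (h2 i)
  · -- proportionality
    obtain ⟨i0, -, hmin⟩ := Finset.exists_min_image Finset.univ
      (fun i => x1 i / x2 i) ⟨⟨0, hn⟩, Finset.mem_univ _⟩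
    set α := x1 i0 / x2 i0 with hα
    have hαpos : 0 < α := div_pos (hp1 i0) (hp2 i0)
    refine ⟨α, hαpos, ?_⟩
    have hw0 : ∀ i, 0 ≤ x1 i - α * x2 i := by
      intro i
      have h := hmin i (Finset.mem_univ i)
      have : α * x2 i ≤ (x1 i / x2 i) * x2 i :=
        mul_le_mul_of_nonneg_right h (hp2 i).le
      rw [div_mul_cancel₀ _ (hp2 i).ne'] at this
      linarith
    have hwi0 : x1 i0 - α * x2 i0 = 0 := by
      rw [hα, div_mul_cancel₀ _ (hp2 i0).ne', sub_self]
    have hsw : ∀ i, ∑ j, B i j * (x1 j - α * x2 j)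
        = (∑ j, B i j * x1 j) - α * ∑ j, B i j * x2 j := by
      intro i
      rw [Finset.mul_sum, ← Finset.sum_sub_distrib]
      exact Finset.sum_congr rfl fun j _ => by ring
    have hweq : ∀ i, (fun k => x1 k - α * x2 k) i = 0 →
        ∑ j, B i j * (fun k => x1 k - α * x2 k) j = 0 := by
      intro i h0
      simp only at h0 ⊢
      rw [hsw i]
      have key : (1 - x1 i - x2 i) * ((∑ j, B i j * x1 j) - α * ∑ j, B i j * x2 j)
          = δ i * (x1 i - α * x2 i) := by
        linear_combination (heq1 i) - α * (heq2 i)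
      rw [h0, mul_zero] at key
      exact (mul_eq_zero.mp key).resolve_left (hfac i).ne'
    rcases eq_or_ne (fun k => x1 k - α * x2 k) (0 : Fin n → ℝ) with hw | hw
    · funext i
      have := congrFun hw i
      simp only [Pi.zero_apply] at this
      simp only [Pi.smul_apply, smul_eq_mul]
      linarith
    · exfalso
      have hpos := pos_prop B hB hirr (fun k => x1 k - α * x2 k) hw0 hw hweq i0
      exact absurd hwi0 hpos.ne'
end

section
/- Let x* be the unique strictly positive equilibrium of the single-virus system ż = (-D+B-ZB)z with δ_i > 0, B irreducible nonnegative, and s(-D+B) > 0. Then the matrix J = -D + B - X*B - diag(Bx*) (where X* = diag(x*)) satisfies s(J) < 0; in particular, J is nonsingular. -/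
/-- Key lemma: if `M` is Metzler (nonnegative off-diagonal), `x ≫ 0`, and `v ≠ 0` is a
complex eigenvector of `M` with eigenvalue `z`, then `z.re ≤ (Mx)_i / x_i` for some `i`. -/
lemma metzler_eigen_bound {n : ℕ} (M : Matrix (Fin n) (Fin n) ℝ) (x : Fin n → ℝ)
    (hx : ∀ i, 0 < x i) (hM : ∀ i j, i ≠ j → 0 ≤ M i j)
    (z : ℂ) (v : Fin n → ℂ) (hv : v ≠ 0)
    (hzv : (M.map (fun t : ℝ => (t : ℂ))).mulVec v = z • v) :
    ∃ i, z.re ≤ M.mulVec x i / x i := by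
  obtain ⟨j0, hj0⟩ := Function.ne_iff.mp hv
  obtain ⟨i, -, hi⟩ := Finset.exists_max_image Finset.univ
    (fun j => ‖v j‖ / x j) ⟨j0, Finset.mem_univ _⟩
  have hj0' : 0 < ‖v j0‖ / x j0 :=
    div_pos (by simpa using hj0) (hx j0)
  have hci : 0 < ‖v i‖ := by
    have h1 := hi j0 (Finset.mem_univ _)
    have h2 : 0 < ‖v i‖ / x i := lt_of_lt_of_le hj0' h1
    have := mul_pos h2 (hx i)
    rwa [div_mul_cancel₀] at this
    exact (hx i).ne'
  have hvj : ∀ j, ‖v j‖ ≤ ‖v i‖ / x i * x j := by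
    intro j
    have h1 := hi j (Finset.mem_univ _)
    rw [div_le_div_iff₀ (hx j) (hx i)] at h1
    rw [div_mul_eq_mul_div, le_div_iff₀ (hx i)]
    linarith
  have heqi := congrFun hzv i
  simp only [Matrix.mulVec, dotProduct, Matrix.map_apply, Pi.smul_apply,
    smul_eq_mul] at heqi
  have hsplit : (z - (M i i : ℂ)) * v i = ∑ j ∈ Finset.univ.erase i, (M i j : ℂ) * v j := by
    have h2 := Finset.add_sum_erase Finset.univ (fun j => (M i j : ℂ) * v j)
      (Finset.mem_univ i)
    rw [← h2] at heqi
    linear_combination -heqi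
  have habs : ‖z - (M i i : ℂ)‖ * ‖v i‖
      ≤ (∑ j ∈ Finset.univ.erase i, M i j * x j) * (‖v i‖ / x i) := by
    rw [← norm_mul, hsplit]
    calc ‖∑ j ∈ Finset.univ.erase i, (M i j : ℂ) * v j‖
        ≤ ∑ j ∈ Finset.univ.erase i, ‖(M i j : ℂ) * v j‖ :=
          norm_sum_le _ _
      _ ≤ ∑ j ∈ Finset.univ.erase i, M i j * (‖v i‖ / x i * x j) := by
          apply Finset.sum_le_sum
          intro j hj
          rw [norm_mul, Complex.norm_real, Real.norm_eq_abs,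
            abs_of_nonneg (hM i j (Finset.ne_of_mem_erase hj).symm)]
          exact mul_le_mul_of_nonneg_left (hvj j) (hM i j (Finset.ne_of_mem_erase hj).symm)
      _ = (∑ j ∈ Finset.univ.erase i, M i j * x j) * (‖v i‖ / x i) := by
          rw [Finset.sum_mul]
          apply Finset.sum_congr rfl
          intro j hj
          ring
  have habs2 : ‖z - (M i i : ℂ)‖
      ≤ (∑ j ∈ Finset.univ.erase i, M i j * x j) / x i := by
    rw [← mul_le_mul_iff_of_pos_right hci]
    calc ‖z - (M i i : ℂ)‖ * ‖v i‖
        ≤ (∑ j ∈ Finset.univ.erase i, M i j * x j) * (‖v i‖ / x i) := habs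
      _ = (∑ j ∈ Finset.univ.erase i, M i j * x j) / x i * ‖v i‖ := by ring
  have hre : z.re - M i i ≤ ‖z - (M i i : ℂ)‖ := by
    have := Complex.re_le_norm (z - (M i i : ℂ))
    simpa using this
  refine ⟨i, ?_⟩
  have hsum : M.mulVec x i = M i i * x i + ∑ j ∈ Finset.univ.erase i, M i j * x j := by
    simp only [Matrix.mulVec, dotProduct]
    rw [← Finset.add_sum_erase Finset.univ (fun j => M i j * x j) (Finset.mem_univ i)]
  rw [hsum, add_div, mul_div_assoc, div_self (hx i).ne', mul_one]
  linarith

theorem stmt12 {n : ℕ} (δ : Fin n → ℝ) (B : Matrix (Fin n) (Fin n) ℝ)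
    (hδ : ∀ i, 0 < δ i) (hB : ∀ i j, 0 ≤ B i j) (hirr : Irred B)
    (hs : 0 < spA (-(Matrix.diagonal δ) + B))
    (x : Fin n → ℝ) (hx : ∀ i, 0 < x i ∧ x i < 1)
    (heq : ∀ i, -δ i * x i + (1 - x i) * ∑ j, B i j * x j = 0)
    (J : Matrix (Fin n) (Fin n) ℝ)
    (hJ : J = -(Matrix.diagonal δ) + B - Matrix.diagonal x * B
        - Matrix.diagonal (B.mulVec x)) :
    spA J < 0 ∧ IsUnit J.det := by
  -- rule out n = 0
  rcases Nat.eq_zero_or_pos n with h0 | hpos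
  · exfalso
    subst h0
    have hspec : spectrum ℂ ((-(Matrix.diagonal δ) + B).map (fun t : ℝ => (t : ℂ))) = ∅ := by
      ext z
      simp only [spectrum.mem_iff, Set.mem_empty_iff_false, iff_false, not_not]
      exact isUnit_of_subsingleton _
    rw [spA, hspec] at hs
    simp [Real.sSup_empty] at hs
  haveI : NeZero n := ⟨hpos.ne'⟩
  have hx0 : ∀ i, 0 < x i := fun i => (hx i).1
  have hx1 : ∀ i, x i < 1 := fun i => (hx i).2
  -- B.mulVec x is strictly positive
  have hBx : ∀ i, 0 < B.mulVec x i := by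
    intro i
    have h1 := heq i
    have h2 : B.mulVec x i = ∑ j, B i j * x j := by
      simp [Matrix.mulVec, dotProduct]
    rw [h2]
    nlinarith [hδ i, hx0 i, hx1 i]
  -- J x = -(Bx) * x componentwise
  have hJx : ∀ i, J.mulVec x i = -(B.mulVec x i * x i) := by
    intro i
    have h2 : B.mulVec x i = ∑ j, B i j * x j := by
      simp [Matrix.mulVec, dotProduct]
    rw [hJ, Matrix.sub_mulVec, Matrix.sub_mulVec, Matrix.add_mulVec, Matrix.neg_mulVec]
    rw [← Matrix.mulVec_mulVec]
    simp only [Pi.sub_apply, Pi.add_apply, Pi.neg_apply, Matrix.mulVec_diagonal]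
    have h1 := heq i
    rw [← h2] at h1
    linarith
  have hJxneg : ∀ i, J.mulVec x i < 0 := by
    intro i
    rw [hJx i]
    exact neg_lt_zero.mpr (mul_pos (hBx i) (hx0 i))
  -- J has nonnegative off-diagonal entries
  have hJoff : ∀ i j, i ≠ j → 0 ≤ J i j := by
    intro i j hij
    rw [hJ]
    simp only [Matrix.sub_apply, Matrix.add_apply, Matrix.neg_apply,
      Matrix.diagonal_apply_ne _ hij, Matrix.diagonal_mul]
    have : 0 ≤ (1 - x i) * B i j :=
      mul_nonneg (by linarith [hx1 i]) (hB i j)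
    nlinarith
  -- the negative bound
  haveI : Nonempty (Fin n) := Fin.pos_iff_nonempty.mp hpos
  set a : ℝ := Finset.univ.sup' Finset.univ_nonempty (fun i => J.mulVec x i / x i) with ha_def
  have ha : a < 0 := by
    rw [ha_def, Finset.sup'_lt_iff]
    intro i _
    exact div_neg_of_neg_of_pos (hJxneg i) (hx0 i)
  have hle : ∀ i, J.mulVec x i / x i ≤ a := fun i =>
    Finset.le_sup' (fun i => J.mulVec x i / x i) (Finset.mem_univ i)
  -- every spectral value has real part ≤ a
  set Jc := J.map (fun t : ℝ => (t : ℂ)) with hJc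
  have hspec : ∀ z ∈ spectrum ℂ Jc, z.re ≤ a := by
    intro z hz
    rw [spectrum.mem_iff, Matrix.isUnit_iff_isUnit_det, isUnit_iff_ne_zero, not_not] at hz
    obtain ⟨v, hv, hv0⟩ := Matrix.exists_mulVec_eq_zero_iff.mpr hz
    have hev : Jc.mulVec v = z • v := by
      have h1 := hv0
      rw [Matrix.sub_mulVec, sub_eq_zero] at h1
      rw [← h1, Algebra.algebraMap_eq_smul_one, Matrix.smul_mulVec,
        Matrix.one_mulVec]
    obtain ⟨i, hi⟩ := metzler_eigen_bound J x hx0 hJoff z v hv hev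
    exact hi.trans (hle i)
  -- the spectrum is nonempty
  have hne : (spectrum ℂ Jc).Nonempty := by
    obtain ⟨c, hc⟩ := Module.End.exists_eigenvalue (Matrix.toLinAlgEquiv' Jc)
    exact ⟨c, by
      have := Module.End.hasEigenvalue_iff_mem_spectrum.mp hc
      rwa [AlgEquiv.spectrum_eq] at this⟩
  constructor
  · -- spA J < 0
    rw [spA]
    have : sSup ((fun z : ℂ => z.re) '' spectrum ℂ Jc) ≤ a := by
      apply csSup_le (hne.image _)
      rintro y ⟨z, hz, rfl⟩
      exact hspec z hz
    exact lt_of_le_of_lt this ha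
  · -- J.det is a unit
    rw [isUnit_iff_ne_zero]
    intro hdet
    have hdetC : Jc.det = 0 := by
      have := (Complex.ofRealHom : ℝ →+* ℂ).map_det J
      rw [hdet] at this
      simpa [hJc, Matrix.map] using this.symm
    obtain ⟨v, hv, hv0⟩ := Matrix.exists_mulVec_eq_zero_iff.mpr hdetC
    have hev : Jc.mulVec v = (0 : ℂ) • v := by rw [hv0, zero_smul]
    obtain ⟨i, hi⟩ := metzler_eigen_bound J x hx0 hJoff 0 v hv hev
    simp only [Complex.zero_re] at hi
    exact absurd (hi.trans (hle i)) (not_le.mpr ha)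
end

section
/- Suppose the bi-virus Jacobian is evaluated at a coexistence equilibrium (x̃¹, x̃²) of the homogeneous model with δ¹/β¹ = δ²/β² and x̃¹ = α x̃² ≫ 0. Then the vector (x̃¹, -x̃¹) ∈ R^{2n} is in the kernel of the Jacobian, i.e., the Jacobian has a zero eigenvalue. -/
lemma aux_top {n : ℕ} (M D : Matrix (Fin n) (Fin n) ℝ) (d : ℝ) (x : Fin n → ℝ) :
    (M - d • 1 - D).mulVec x + (-D).mulVec (-x) = M.mulVec x - d • x := by
  rw [Matrix.sub_mulVec, Matrix.sub_mulVec, Matrix.neg_mulVec, Matrix.mulVec_neg,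
    Matrix.smul_mulVec, Matrix.one_mulVec]
  abel

lemma aux_bot {n : ℕ} (M D : Matrix (Fin n) (Fin n) ℝ) (d : ℝ) (x : Fin n → ℝ) :
    (-D).mulVec x + (M - d • 1 - D).mulVec (-x) = -(M.mulVec x) + d • x := by
  rw [Matrix.mulVec_neg, Matrix.sub_mulVec, Matrix.sub_mulVec, Matrix.neg_mulVec,
    Matrix.smul_mulVec, Matrix.one_mulVec]
  abel

theorem stmt17 {n : ℕ} (A : Matrix (Fin n) (Fin n) ℝ)
    (hA : ∀ i j, 0 ≤ A i j) (hirr : Irred A)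
    (δ1 δ2 β1 β2 : ℝ) (hδ1 : 0 < δ1) (hδ2 : 0 < δ2) (hβ1 : 0 < β1) (hβ2 : 0 < β2)
    (hratio : δ1 / β1 = δ2 / β2)
    (x1 x2 : Fin n → ℝ) (hx1pos : ∀ i, 0 < x1 i)
    (α : ℝ) (hα : 0 < α) (hprop : x1 = α • x2)
    (heig1 : ((1 - Matrix.diagonal x1 - Matrix.diagonal x2) * A).mulVec x1
        = (δ1 / β1) • x1)
    (heig2 : ((1 - Matrix.diagonal x1 - Matrix.diagonal x2) * A).mulVec x2
        = (δ2 / β2) • x2)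
    (J : Matrix (Fin n ⊕ Fin n) (Fin n ⊕ Fin n) ℝ)
    (hJ : J = Matrix.fromBlocks
      ((1 - Matrix.diagonal x1 - Matrix.diagonal x2) * (β1 • A) - δ1 • 1
          - Matrix.diagonal ((β1 • A).mulVec x1))
      (-Matrix.diagonal ((β1 • A).mulVec x1))
      (-Matrix.diagonal ((β2 • A).mulVec x2))
      ((1 - Matrix.diagonal x1 - Matrix.diagonal x2) * (β2 • A) - δ2 • 1
          - Matrix.diagonal ((β2 • A).mulVec x2))) :
    J.mulVec (Sum.elim x1 (fun i => -x1 i)) = 0 := by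
  set X : Matrix (Fin n) (Fin n) ℝ := 1 - Matrix.diagonal x1 - Matrix.diagonal x2 with hX
  have h1 : (X * (β1 • A)).mulVec x1 = δ1 • x1 := by
    rw [Matrix.mul_smul, Matrix.smul_mulVec, heig1, smul_smul]
    congr 1
    field_simp
  have hx1' : (X * A).mulVec x1 = (δ2 / β2) • x1 := by
    rw [hprop, Matrix.mulVec_smul, heig2, smul_comm]
  have h2 : (X * (β2 • A)).mulVec x1 = δ2 • x1 := by
    rw [Matrix.mul_smul, Matrix.smul_mulVec, hx1', smul_smul]
    congr 1
    field_simp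
  have hneg : (fun i => -x1 i) = -x1 := rfl
  rw [hJ, hneg, Matrix.fromBlocks_mulVec]
  have hl : Sum.elim x1 (-x1) ∘ Sum.inl = x1 := rfl
  have hr : Sum.elim x1 (-x1) ∘ Sum.inr = -x1 := rfl
  rw [hl, hr, aux_top, aux_bot, h1, h2, sub_self, neg_add_cancel]
  ext (i | i) <;> rfl
end

section
/- Let M be an irreducible Metzler n×n matrix with s(M) = 0, and let P be a positive diagonal matrix such that Q = M'P + PM is negative semidefinite. Then for every nonzero x ≥ 0 that has at least one zero entry, x'Qx < 0. -/
theorem stmt18 {n : ℕ} (M : Matrix (Fin n) (Fin n) ℝ)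
    (hMetz : ∀ i j, i ≠ j → 0 ≤ M i j) (hirr : Irred M) (hs : spA M = 0)
    (P : Fin n → ℝ) (hP : ∀ i, 0 < P i)
    (Q : Matrix (Fin n) (Fin n) ℝ)
    (hQ : Q = M.transpose * Matrix.diagonal P + Matrix.diagonal P * M)
    (hnsd : ∀ v : Fin n → ℝ, dotProduct v (Q.mulVec v) ≤ 0) :
    ∀ x : Fin n → ℝ, (∀ i, 0 ≤ x i) → x ≠ 0 → (∃ i, x i = 0) →
      dotProduct x (Q.mulVec x) < 0 := by
  intro x hx0 hxne hex
  obtain ⟨i0, hi0⟩ := hex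
  have hQij : ∀ i j, Q i j = M j i * P j + P i * M i j := by
    intro i j
    simp [hQ, Matrix.add_apply, Matrix.mul_diagonal, Matrix.diagonal_mul,
      Matrix.transpose_apply]
  have hsym : ∀ i j, Q i j = Q j i := by
    intro i j; rw [hQij, hQij]; ring
  have hbil : ∀ v w : Fin n → ℝ,
      dotProduct v (Q.mulVec w) = dotProduct w (Q.mulVec v) := by
    intro v w
    simp only [dotProduct, Matrix.mulVec, Finset.mul_sum]
    rw [Finset.sum_comm]
    refine Finset.sum_congr rfl fun j _ => Finset.sum_congr rfl fun i _ => ?_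
    rw [hsym i j]; ring
  rcases lt_or_eq_of_le (hnsd x) with h | h
  · exact h
  exfalso
  -- from xᵀQx = 0 and negative semidefiniteness, Qx = 0
  set u := Q.mulVec x with hu
  have key : ∀ t : ℝ,
      2 * t * dotProduct u u + t ^ 2 * dotProduct u (Q.mulVec u) ≤ 0 := by
    intro t
    have h1 := hnsd (x + t • u)
    have e1 : dotProduct (x + t • u) (Q.mulVec (x + t • u))
        = dotProduct x (Q.mulVec x)
          + t * dotProduct x (Q.mulVec u)
          + t * dotProduct u (Q.mulVec x)
          + t ^ 2 * dotProduct u (Q.mulVec u) := by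
      rw [Matrix.mulVec_add, Matrix.mulVec_smul, dotProduct_add,
        add_dotProduct, add_dotProduct, smul_dotProduct,
        dotProduct_smul, smul_dotProduct, dotProduct_smul]
      simp only [smul_eq_mul]
      ring
    rw [e1, ← h, hbil x u, ← hu] at h1
    linarith [h1]
  have hb : dotProduct u (Q.mulVec u) ≤ 0 := hnsd u
  have ha' : 0 ≤ dotProduct u u :=
    Finset.sum_nonneg fun i _ => mul_self_nonneg (u i)
  have huz : u = 0 := by
    by_contra hune
    have hapos : 0 < dotProduct u u := by
      rcases lt_or_eq_of_le ha' with h' | h'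
      · exact h'
      · exact absurd (dotProduct_self_eq_zero.mp h'.symm) hune
    set a := dotProduct u u
    set b := dotProduct u (Q.mulVec u)
    have ht : (0:ℝ) < a / (1 - b) := div_pos hapos (by linarith)
    have hk := key (a / (1 - b))
    have hden : (0:ℝ) < 1 - b := by linarith
    set t := a / (1 - b) with htdef
    have htb : t * (1 - b) = a := div_mul_cancel₀ a (ne_of_gt hden)
    nlinarith [hk, mul_pos ht hapos, sq_nonneg t, mul_pos ht hden]
  -- propagation of zero entries
  have prop : ∀ i, x i = 0 → ∀ j, i ≠ j → 0 < M i j → x j = 0 := by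
    intro i hxi j hij hMij
    have hi : (Finset.univ.sum fun j => Q i j * x j) = 0 := by
      have : u i = 0 := by rw [huz]; rfl
      simpa [hu, Matrix.mulVec, dotProduct] using this
    have hnn : ∀ j' ∈ Finset.univ, 0 ≤ Q i j' * x j' := by
      intro j' _
      by_cases hj' : j' = i
      · subst hj'; rw [hxi]; simp
      · have hq : 0 ≤ Q i j' := by
          rw [hQij]
          have h1 := hMetz i j' (Ne.symm hj')
          have h2 := hMetz j' i hj'
          have := (hP i).le; have := (hP j').le
          positivity
        exact mul_nonneg hq (hx0 j')
    have hterm : Q i j * x j = 0 :=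
      (Finset.sum_eq_zero_iff_of_nonneg hnn).mp hi j (Finset.mem_univ j)
    have hqpos : 0 < Q i j := by
      rw [hQij]
      have h2 := hMetz j i (Ne.symm hij)
      nlinarith [hP i, hP j, (hP j).le]
    rcases mul_eq_zero.mp hterm with h' | h'
    · exact absurd h' (ne_of_gt hqpos)
    · exact h'
  obtain ⟨j, hj⟩ := Function.ne_iff.mp hxne
  obtain ⟨m, c, hc0, hcm, hpath⟩ := hirr i0 j
  have hzero : ∀ k, k ≤ m → x (c (m - k)) = 0 := by
    intro k
    induction k with
    | zero => intro _; simpa [hcm] using hi0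
    | succ k ih =>
      intro hk
      have h1 := ih (Nat.le_of_succ_le hk)
      have hlt : m - (k + 1) < m := by omega
      have hedge := hpath (m - (k + 1)) hlt
      have heq : m - (k + 1) + 1 = m - k := by omega
      rw [heq] at hedge
      by_cases hcc : c (m - (k + 1)) = c (m - k)
      · rw [hcc]; exact h1
      · exact prop (c (m - k)) h1 (c (m - (k + 1))) (Ne.symm hcc) hedge
  have := hzero m le_rfl
  rw [Nat.sub_self, hc0] at this
  exact hj this
end
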